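/- arXiv:2407.14384 — 4 statements merged into one kernel-verified Lean document; each statement's English description precedes it below -/
import Mathlib

section
/- For every two-counter automaton M: chase(D_grid, R_grid) ⊨ Q_M if and only if M halts when started from the configuration (q0, 0, 0). -/
set_option maxHeartbeats 1000000

noncomputable section

open Classical

/-! ### Basic syntax: predicates, atoms, rules, databases, instances -/

/-- An abstract atom: a predicate identifier together with a list of
argument identifiers (variables in rules/queries, constants in databases). -/
abbrev PAtom : Type := ℕ × List ℕ

/-- An existential rule `∀x∀y (α(x,y) → ∃z β(y,z))`, given by a body
(a finite conjunction/list of atoms over variables) and a single head atom.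
Head variables not occurring in the body are (implicitly) existentially
quantified. -/
abbrev ERule : Type := List PAtom × PAtom

/-- A ruleset is a finite set (list) of existential rules. -/
abbrev Ruleset : Type := List ERule

/-- A database is a finite set (list) of facts, i.e. atoms over constants. -/
abbrev Database : Type := List PAtom

/-- Terms: constants, (labelled) nulls, and functional (Skolem) terms. -/
inductive GTerm : Type where
  | const : ℕ → GTerm
  | null : ℕ → GTerm
  | func : ℕ → List GTerm → GTerm

instance : DecidableEq GTerm := Classical.decEq _

/-- A (ground) atom of an instance: a predicate with a list of terms. -/
structure GAtom : Type where
  pred : ℕ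
  args : List GTerm

/-- An instance is a (possibly infinite) set of atoms (it is automatically
countable, as `GAtom` is a countable type). -/
abbrev Inst : Type := Set GAtom

/-- Applying a variable assignment to an abstract atom. -/
def substAtom (h : ℕ → GTerm) (a : PAtom) : GAtom := ⟨a.1, a.2.map h⟩

/-- The list of all variable occurrences in the body of a rule. -/
def bodyVarList (ρ : ERule) : List ℕ := ρ.1.foldr (fun a r => a.2 ++ r) []

/-- The variables of the head of a rule. -/
def headVars (ρ : ERule) : List ℕ := ρ.2.2

/-- A join variable: a variable occurring more than once in the body. -/
def isJoinVar (ρ : ERule) (v : ℕ) : Prop := 1 < (bodyVarList ρ).count v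

/-- The frontier of a rule: variables shared between body and head. -/
def frontierVars (ρ : ERule) : Set ℕ := {v | v ∈ bodyVarList ρ ∧ v ∈ headVars ρ}

/-- Existential variables of a rule: head variables not occurring in the body. -/
def existVars (ρ : ERule) : Set ℕ := {v | v ∈ headVars ρ ∧ v ∉ bodyVarList ρ}

/-- Satisfaction of an existential rule by an instance: every homomorphic
match of the body extends to a match of the head. -/
def satRule (I : Inst) (ρ : ERule) : Prop :=
  ∀ h : ℕ → GTerm, (∀ a ∈ ρ.1, substAtom h a ∈ I) →
    ∃ g : ℕ → GTerm, (∀ v ∈ bodyVarList ρ, g v = h v) ∧ substAtom g ρ.2 ∈ I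

/-- The instance corresponding to a database (constants interpreted as constants). -/
def dbInst (D : Database) : Inst := {α | ∃ a ∈ D, α = substAtom GTerm.const a}

/-- `I` is a model of the database `D` and the ruleset `R`. -/
def isModelOf (I : Inst) (D : Database) (R : Ruleset) : Prop :=
  dbInst D ⊆ I ∧ ∀ ρ ∈ R, satRule I ρ

/-- The active domain of an instance. -/
def adom (I : Inst) : Set GTerm := {t | ∃ α ∈ I, t ∈ α.args}

/-! ### Paths and regular path queries -/

/-- A directed path from `s` to `t` in the instance `I` whose successive
binary-predicate edge labels spell the word `w`. -/
inductive IPath (I : Inst) : GTerm → List ℕ → GTerm → Prop where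
  | nil (t : GTerm) : IPath I t [] t
  | cons {s t u : GTerm} {p : ℕ} {w : List ℕ} :
      (⟨p, [s, t]⟩ : GAtom) ∈ I → IPath I t w u → IPath I s (p :: w) u

/-- Satisfaction of the Boolean path query `∃x,y. L(x,y)` (with `x ≠ y`,
`L` a word language over binary predicates) by an instance. -/
def satLang (I : Inst) (L : Set (List ℕ)) : Prop :=
  ∃ s t w, s ∈ adom I ∧ t ∈ adom I ∧ IPath I s w t ∧ w ∈ L

/-- Satisfaction of the Boolean RPQ `∃x,y. A(x,y)` given by a regular
expression `A` over binary predicates. -/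
def satRPQ (I : Inst) (A : RegularExpression ℕ) : Prop := satLang I A.matches'

/-- Certain-answer entailment of a Boolean RPQ: every model of `D` and `R`
satisfies the query. -/
def entailsRPQ (D : Database) (R : Ruleset) (A : RegularExpression ℕ) : Prop :=
  ∀ I : Inst, isModelOf I D R → satRPQ I A

/-! ### The Skolem chase (with Skolem symbols determined by the isomorphism
type of the instantiated rule head) -/

/-- The result of applying a trigger `(ρ, h)`: the instantiated head atom,
where each existential variable is replaced by a Skolem term whose function
symbol encodes the isomorphism type of the instantiated head query, applied
to the (distinct) frontier terms. -/
def skolemAtom (ρ : ERule) (h : ℕ → GTerm) : GAtom :=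
  let bv := bodyVarList ρ
  let hargs : List (GTerm ⊕ ℕ) :=
    ρ.2.2.map (fun v => if v ∈ bv then Sum.inl (h v) else Sum.inr v)
  let fts : List GTerm := (hargs.filterMap Sum.getLeft?).dedup
  let evs : List ℕ := (hargs.filterMap Sum.getRight?).dedup
  let pat : ℕ × List (ℕ ⊕ ℕ) :=
    (ρ.2.1, hargs.map (fun x =>
      match x with
      | Sum.inl t => Sum.inl (fts.findIdx (fun u => decide (u = t)))
      | Sum.inr v => Sum.inr (evs.findIdx (fun u => decide (u = v)))))
  ⟨ρ.2.1, ρ.2.2.map (fun v =>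
    if v ∈ bv then h v
    else GTerm.func (Encodable.encode (pat, evs.findIdx (fun u => decide (u = v)))) fts)⟩

/-- One (parallel) chase step: apply all triggers of `R` in `I`. -/
def chaseStep (R : Set ERule) (I : Inst) : Inst :=
  I ∪ {α | ∃ ρ ∈ R, ∃ h : ℕ → GTerm, (∀ a ∈ ρ.1, substAtom h a ∈ I) ∧ α = skolemAtom ρ h}

/-- The finite stages of the Skolem chase. -/
def chaseStage (R : Set ERule) (I : Inst) : ℕ → Inst
  | 0 => I
  | n + 1 => chaseStep R (chaseStage R I n)

/-- The Skolem chase of an instance `I` with a (possibly infinite) set of rules `R`. -/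
def chase (I : Inst) (R : Set ERule) : Inst := ⋃ n, chaseStage R I n

/-- The set of rules of a (finite, syntactic) ruleset. -/
def rsSet (R : Ruleset) : Set ERule := {ρ | ρ ∈ R}

/-! ### Conjunctive queries, UCQs and finite unification sets -/

/-- Satisfaction of a CQ (list of atoms; `free` lists its free variables,
all other variables are existential) under the answer tuple `a`. -/
def satCQ (I : Inst) (atoms : List PAtom) (free : List ℕ) (a : List GTerm) : Prop :=
  ∃ h : ℕ → GTerm, List.Forall₂ (fun v t => h v = t) free a ∧ ∀ β ∈ atoms, substAtom h β ∈ I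

/-- A UCQ: a disjunction (list) of CQs sharing a tuple of free variables. -/
abbrev UCQ : Type := List (List PAtom) × List ℕ

/-- Satisfaction of a UCQ under the answer tuple `a`. -/
def satUCQ (I : Inst) (Q : UCQ) (a : List GTerm) : Prop := ∃ d ∈ Q.1, satCQ I d Q.2 a

/-- `R` is a finite unification set (fus): every UCQ has a UCQ rewriting. -/
def isFUS (R : Ruleset) : Prop :=
  ∀ Q : UCQ, ∃ Q' : UCQ, Q'.2 = Q.2 ∧
    ∀ (D : Database) (a : List ℕ),
      (satUCQ (chase (dbInst D) (rsSet R)) Q (a.map GTerm.const) ↔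
        satUCQ (dbInst D) Q' (a.map GTerm.const))

/-! ### Sticky and stellar rulesets -/

/-- Variable `v` appears at a position of the head of `ρ` marked by `m`. -/
def markedInHead (m : ℕ → Set ℕ) (ρ : ERule) (v : ℕ) : Prop :=
  ∃ i ∈ m ρ.2.1, ρ.2.2[i]? = some v

/-- `m` is a sticky marking for the set of rules `R`: every join variable of a
rule appears at a marked position of its head atom, and every body variable at
a marked position appears at a marked position of the head atom. -/
def stickyMarking (m : ℕ → Set ℕ) (R : Set ERule) : Prop :=
  ∀ ρ ∈ R,
    (∀ v, isJoinVar ρ v → markedInHead m ρ v) ∧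
    (∀ v, ∀ a ∈ ρ.1, (∃ i ∈ m a.1, a.2[i]? = some v) → markedInHead m ρ v)

/-- A (possibly infinite) set of rules is sticky iff it admits a sticky marking. -/
def isStickySet (R : Set ERule) : Prop := ∃ m, stickyMarking m R

/-- A ruleset is sticky iff it admits a sticky marking. -/
def isSticky (R : Ruleset) : Prop := isStickySet (rsSet R)

/-- A stellar rule: at most one join variable, which must be a frontier
(head) variable. -/
def isStellarRule (ρ : ERule) : Prop :=
  (∀ v w, isJoinVar ρ v → isJoinVar ρ w → v = w) ∧
  ∀ v, isJoinVar ρ v → v ∈ headVars ρ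

/-! ### Merging two terms of an instance -/

/-- The map replacing the terms `s` and `t` by `u`. -/
def mergeMap (s t u : GTerm) : GTerm → GTerm := fun v => if v = s ∨ v = t then u else v

/-- `I[s,t ↦ u]`: the instance obtained from `I` by replacing every
occurrence of `s` or `t` by `u`. -/
def mergeInst (I : Inst) (s t u : GTerm) : Inst :=
  (fun α => GAtom.mk α.pred (α.args.map (mergeMap s t u))) '' I

/-! ### Stellar queries and stellar types -/

/-- A stellar query with free variable `y`: `y` is the only join variable and
each atom contains at most one occurrence of `y`. -/
def isSQ (atoms : List PAtom) (y : ℕ) : Prop :=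
  (∀ v, v ≠ y → (atoms.foldr (fun a r => a.2 ++ r) []).count v ≤ 1) ∧
  ∀ a ∈ atoms, a.2.count y ≤ 1

/-- Satisfaction of a stellar query at the term `s`. -/
def satSQ (I : Inst) (atoms : List PAtom) (y : ℕ) (s : GTerm) : Prop :=
  ∃ h : ℕ → GTerm, h y = s ∧ ∀ a ∈ atoms, substAtom h a ∈ I

/-- Two terms have the same stellar type `★(s) = ★(t)` iff they satisfy
exactly the same stellar queries (equivalently, their most specific stellar
queries are equivalent). -/
def sameStellarType (I : Inst) (s t : GTerm) : Prop :=
  ∀ (atoms : List PAtom) (y : ℕ), isSQ atoms y → (satSQ I atoms y s ↔ satSQ I atoms y t)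

/-! ### Regular types -/

/-- The regular type `↑_A(t)` of a term w.r.t. a DFA: all pairs `(q, q')` such
that `t` has an outgoing path labelled by some word `w` with `δ*(q, w) = q'`. -/
def regType {σ : Type} (I : Inst) (dfa : DFA ℕ σ) (t : GTerm) : Set (σ × σ) :=
  {p | ∃ w u, IPath I t w u ∧ dfa.evalFrom p.1 w = p.2}

/-! ### Homomorphisms between instances -/

/-- A homomorphism from `I` to `J`: a constant-preserving map on terms
sending every atom of `I` to an atom of `J`. -/
def isHom (h : GTerm → GTerm) (I J : Inst) : Prop :=
  (∀ c, h (GTerm.const c) = GTerm.const c) ∧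
  ∀ α ∈ I, (⟨α.pred, α.args.map h⟩ : GAtom) ∈ J

/-! ### Backward rewriting (à la König et al.) -/

/-- Applying a variable renaming to an abstract atom. -/
def substP (σ : ℕ → ℕ) (a : PAtom) : PAtom := (a.1, a.2.map σ)

/-- The variables of a CQ. -/
def cqVars (Q : List PAtom) : Set ℕ := {v | ∃ a ∈ Q, v ∈ a.2}

/-- The rule `ρ` is backward applicable to the CQ `Q` (with free variables
`Y`) with respect to the variable identification `σ` and the isomorphism `f`
from the head of `ρ` to an atom of `Q|σ`. -/
def backApp (ρ : ERule) (Y : Set ℕ) (Q : List PAtom) (σ f : ℕ → ℕ) : Prop :=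
  (∀ y ∈ Y, σ y = y) ∧
  (∀ v, ∀ y ∈ Y, σ v = y → v = y) ∧
  substP f ρ.2 ∈ Q.map (substP σ) ∧
  (∀ v w, v ∈ headVars ρ → w ∈ headVars ρ → f v = f w → v = w) ∧
  (∀ z ∈ existVars ρ, f z ∉ Y) ∧
  (∀ a ∈ Q.map (substP σ), (∃ z ∈ existVars ρ, f z ∈ a.2) → a = substP f ρ.2)

/-- One backward rewriting step on CQs with free variables `Y`, using a rule
of `R` with a minimal variable identification: the matched atom is replaced
by the rule body (with fresh non-frontier variables). -/
def backStep (R : Set ERule) (Y : Set ℕ) (Q Q' : List PAtom) : Prop :=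
  ∃ ρ ∈ R, ∃ σ f g : ℕ → ℕ,
    backApp ρ Y Q σ f ∧
    (∀ σ' : ℕ → ℕ, (∀ v w, σ' v = σ' w → σ v = σ w) →
      (∃ v w, v ∈ cqVars Q ∧ w ∈ cqVars Q ∧ σ v = σ w ∧ σ' v ≠ σ' w) →
      ¬ backApp ρ Y Q σ' f) ∧
    (∀ v ∈ frontierVars ρ, g v = f v) ∧
    (∀ v w, v ∈ bodyVarList ρ → v ∉ headVars ρ → w ∈ bodyVarList ρ → w ∉ headVars ρ →
      g v = g w → v = w) ∧
    (∀ v, v ∈ bodyVarList ρ → v ∉ headVars ρ →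
      g v ∉ cqVars (Q.map (substP σ)) ∧ g v ∉ Y) ∧
    Q' = (Q.map (substP σ)).filter (fun a => decide (a ≠ substP f ρ.2)) ++ ρ.1.map (substP g)

/-- `rew(R)`: `R` together with all rules obtained from rules of `R` by
rewriting their bodies (with the frontier treated as free variables). -/
def rewSet (R : Set ERule) : Set ERule :=
  R ∪ {ρ' | ∃ ρ ∈ R, ∃ q, Relation.ReflTransGen (backStep R (frontierVars ρ)) ρ.1 q ∧ ρ' = (q, ρ.2)}

/-! ### Frontier terms of chase atoms and quick rulesets -/

/-- `t` is a frontier term of the chase atom `β`: a term of `β` introduced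
during the chase strictly earlier than `β`. -/
def isFrontierTermOf (I : Inst) (R : Set ERule) (β : GAtom) (t : GTerm) : Prop :=
  t ∈ β.args ∧ ∃ i, t ∈ adom (chaseStage R I i) ∧ β ∉ chaseStage R I i

/-- A set of rules is quick: every chase atom whose frontier terms all occur
in the initial instance is already produced by the first chase step. -/
def isQuick (R : Set ERule) : Prop :=
  ∀ (I : Inst) (β : GAtom), β ∈ chase I R →
    (∀ t, isFrontierTermOf I R β t → t ∈ adom I) → β ∈ chaseStage R I 1

/-! ### Cores of rule bodies and the rulesets cr⁺(R), R⁺ -/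

/-- A homomorphism between CQs fixing the variables in `Y` pointwise. -/
def cqHomTo (Y : Set ℕ) (q q' : List PAtom) : Prop :=
  ∃ h : ℕ → ℕ, (∀ y ∈ Y, h y = y) ∧ ∀ a ∈ q, substP h a ∈ q'

/-- `q'` is a core of `q` with the variables of `Y` treated as constants:
a minimal sub-conjunction of `q` into which `q` homomorphically maps. -/
def isCoreOf (Y : Set ℕ) (q' q : List PAtom) : Prop :=
  (∀ a ∈ q', a ∈ q) ∧ cqHomTo Y q q' ∧
  ∀ q'' : List PAtom, (∀ a ∈ q'', a ∈ q') → cqHomTo Y q q'' → ∀ a ∈ q', a ∈ q''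

/-- `ρ'` is (a) `core(ρ)`: same head, body a core of the body of `ρ` with the
frontier variables treated as constants. -/
def isCoreRuleOf (ρ' ρ : ERule) : Prop := ρ'.2 = ρ.2 ∧ isCoreOf (frontierVars ρ) ρ'.1 ρ.1

/-- The rule obtained by substituting all join variables of `ρ` by one and
the same fresh variable. -/
def collapseJoins (ρ : ERule) : ERule :=
  let fv := ((bodyVarList ρ ++ headVars ρ).foldr max 0) + 1
  let c : ℕ → ℕ := fun v => if 1 < (bodyVarList ρ).count v then fv else v
  (ρ.1.map (substP c), substP c ρ.2)

/-- `cr⁺(R)`: the cores of the rules of `rew(R)` (via the core-choosing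
function `C`), augmented, for every non-stellar such rule, with its variant
where all join variables are identified with a single fresh variable. -/
def crPlus (C : ERule → ERule) (R : Set ERule) : Set ERule :=
  (C '' rewSet R) ∪
  {ρ' | ∃ ρ ∈ rewSet R, ¬ isStellarRule (C ρ) ∧ ρ' = collapseJoins (C ρ)}

/-- `R⁺`: `cr⁺(R)` with all rules having two or more join variables removed. -/
def rPlusOf (C : ERule → ERule) (R : Set ERule) : Set ERule :=
  {ρ ∈ crPlus C R | ¬ ∃ v w, isJoinVar ρ v ∧ isJoinVar ρ w ∧ v ≠ w}

/-! ### Two-counter automata, the grid database/ruleset, and the query DFA -/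

/-- A (deterministic, Minsky-style) two-counter automaton. Each state `q`
carries the instruction
`if C == 0 then C += 1; goto qt q else C += d; goto qf q`,
where `C` is counter `x` if `cX q` and counter `y` otherwise, and `d = +1`
if `dPlus q` and `d = -1` otherwise. -/
structure TCA where
  numStates : ℕ
  cX : Fin (numStates + 1) → Bool
  dPlus : Fin (numStates + 1) → Bool
  qt : Fin (numStates + 1) → Fin (numStates + 1)
  qf : Fin (numStates + 1) → Fin (numStates + 1)
  q0 : Fin (numStates + 1)
  qhalt : Fin (numStates + 1)

abbrev TCA.State (M : TCA) : Type := Fin (M.numStates + 1)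

/-- One step of a two-counter automaton on a configuration `(q, x, y)`. -/
def TCA.step (M : TCA) : M.State × ℕ × ℕ → M.State × ℕ × ℕ := fun c =>
  let q := c.1
  let x := c.2.1
  let y := c.2.2
  if M.cX q then
    if x = 0 then (M.qt q, 1, y)
    else (M.qf q, (if M.dPlus q then x + 1 else x - 1), y)
  else
    if y = 0 then (M.qt q, x, 1)
    else (M.qf q, x, (if M.dPlus q then y + 1 else y - 1))

/-- `M` halts when started in state `q0` with both counters zero. -/
def TCA.Halts (M : TCA) : Prop := ∃ k, ((M.step)^[k] (M.q0, 0, 0)).1 = M.qhalt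

/-- The fixed predicate identifiers. -/
def pIncX : ℕ := 0
def pIncY : ℕ := 1
def pDecX : ℕ := 2
def pDecY : ℕ := 3
def pXZero : ℕ := 4
def pYZero : ℕ := 5
def pSucc : ℕ := 6
def pZero : ℕ := 7
def pGridPoint : ℕ := 8
def pXCoord : ℕ := 9
def pYCoord : ℕ := 10

/-- `Σ(C += 1)` for the counter selected by `b` (`true` = counter x). -/
def sIncr (b : Bool) : ℕ := if b then pIncX else pIncY
/-- `Σ(C -= 1)`. -/
def sDecr (b : Bool) : ℕ := if b then pDecX else pDecY
/-- `Σ(C == 0)`. -/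
def sZero (b : Bool) : ℕ := if b then pXZero else pYZero

/-- The states of the DFA `A_M`: the states of `M` plus four auxiliary states
(then₁, then₂, else₁, else₂) per state of `M`, plus a sink (`none`). -/
abbrev AState (M : TCA) : Type := Option (M.State ⊕ M.State × Fin 4)

/-- The transition function of the DFA `A_M`: the instruction of each state
`q` of `M` is compiled into the 'then' branch reading
`Σ(C==0), Σ(C==0), Σ(C+=1)` (ending in `qt q`) and the 'else' branch reading
`Σ(C-=1), Σ(C+=1), Σ(C+=d)` (ending in `qf q`). -/
def TCA.delta (M : TCA) : AState M → ℕ → AState M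
  | none, _ => none
  | some (Sum.inl q), a =>
    if a = sZero (M.cX q) then some (Sum.inr (q, (0 : Fin 4)))
    else if a = sDecr (M.cX q) then some (Sum.inr (q, (2 : Fin 4)))
    else none
  | some (Sum.inr (q, i)), a =>
    if i = (0 : Fin 4) then
      (if a = sZero (M.cX q) then some (Sum.inr (q, (1 : Fin 4))) else none)
    else if i = (1 : Fin 4) then
      (if a = sIncr (M.cX q) then some (Sum.inl (M.qt q)) else none)
    else if i = (2 : Fin 4) then
      (if a = sIncr (M.cX q) then some (Sum.inr (q, (3 : Fin 4))) else none)
    else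
      (if a = (if M.dPlus q then sIncr (M.cX q) else sDecr (M.cX q))
        then some (Sum.inl (M.qf q)) else none)

/-- The DFA `A_M` simulating the TCA `M`; its starting (accepting) state is
the starting (halting) state of `M`. -/
def tcaDFA (M : TCA) : DFA ℕ (AState M) :=
  ⟨M.delta, some (Sum.inl M.q0), {some (Sum.inl M.qhalt)}⟩

/-- The fixed database `D_grid = {Succ(a,b), Zero(a)}` (constants `a = 0`, `b = 1`). -/
def Dgrid : Database := [(pSucc, [0, 1]), (pZero, [0])]

/-- The fixed grid-building ruleset `R_grid`. -/
def Rgrid : Ruleset :=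
  [ ([(pSucc, [0, 1])], (pSucc, [1, 2])),
    ([(pSucc, [0, 1]), (pSucc, [2, 3])], (pGridPoint, [0, 2, 4])),
    ([(pGridPoint, [0, 1, 2])], (pXCoord, [2, 0])),
    ([(pGridPoint, [0, 1, 2])], (pYCoord, [2, 1])),
    ([(pXCoord, [3, 0]), (pYCoord, [3, 2]), (pXCoord, [4, 1]), (pYCoord, [4, 2]),
       (pSucc, [0, 1])], (pIncX, [3, 4])),
    ([(pXCoord, [3, 0]), (pYCoord, [3, 2]), (pXCoord, [4, 0]), (pYCoord, [4, 5]),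
       (pSucc, [2, 5])], (pIncY, [3, 4])),
    ([(pIncX, [0, 1])], (pDecX, [1, 0])),
    ([(pIncY, [0, 1])], (pDecY, [1, 0])),
    ([(pXCoord, [0, 1]), (pZero, [1])], (pXZero, [0, 0])),
    ([(pYCoord, [0, 1]), (pZero, [1])], (pYZero, [0, 0])) ]

/-- The grid point with coordinates `(x, y)`. -/
def gpt (x y : ℕ) : GTerm := GTerm.func 0 [GTerm.const x, GTerm.const y]

/-- The infinite grid instance `G`: terms are coordinate pairs, with
`IncX`/`IncY`/`DecX`/`DecY` edges and `XZero`/`YZero` self-loops. -/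
def GridInst : Inst :=
  {α | (∃ x y, α = ⟨pIncX, [gpt x y, gpt (x + 1) y]⟩) ∨
       (∃ x y, α = ⟨pIncY, [gpt x y, gpt x (y + 1)]⟩) ∨
       (∃ x y, α = ⟨pDecX, [gpt (x + 1) y, gpt x y]⟩) ∨
       (∃ x y, α = ⟨pDecY, [gpt x (y + 1), gpt x y]⟩) ∨
       (∃ y, α = ⟨pXZero, [gpt 0 y, gpt 0 y]⟩) ∨
       (∃ x, α = ⟨pYZero, [gpt x 0, gpt x 0]⟩)}

/-- One step of the DFA `A_M` walking over the instance `I`: move along an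
edge of `I` whose label matches a transition from the current state. -/
def walkStep (M : TCA) (I : Inst) (c c' : AState M × GTerm) : Prop :=
  ∃ p, (⟨p, [c.2, c'.2]⟩ : GAtom) ∈ I ∧ M.delta c.1 p = c'.1

/-! ### Encoding regular expressions (for computability statements) -/

/-- A concrete injective serialization of regular expressions (over an
encodable alphabet) as lists of naturals. -/
def encodeREg {α : Type} [Encodable α] : RegularExpression α → List ℕ
  | RegularExpression.zero => [0]
  | RegularExpression.epsilon => [1]
  | RegularExpression.char a => [2, Encodable.encode a]
  | RegularExpression.plus a b => 3 :: (encodeREg a ++ encodeREg b)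
  | RegularExpression.comp a b => 4 :: (encodeREg a ++ encodeREg b)
  | RegularExpression.star a => 5 :: encodeREg a

/-! ### Datalog rules, two-way and higher-arity path queries -/

/-- A Datalog rule: no existential variables in the head. -/
def isDatalogRule (ρ : ERule) : Prop := ∀ v ∈ ρ.2.2, v ∈ bodyVarList ρ

/-- The predicates occurring in a database. -/
def dbPreds (D : Database) : Set ℕ := {p | ∃ a ∈ D, a.1 = p}

/-- The predicates occurring in a ruleset. -/
def rsPreds (R : Ruleset) : Set ℕ := {p | ∃ ρ ∈ R, (∃ a ∈ ρ.1, a.1 = p) ∨ ρ.2.1 = p}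

/-- The predicates occurring in rule heads of a ruleset. -/
def headPreds (R : Ruleset) : Set ℕ := {p | ∃ ρ ∈ R, ρ.2.1 = p}

/-- A two-way path: `inl p` traverses a `p`-edge forwards, `inr p` (i.e. `p⁻`)
traverses a `p`-edge backwards. -/
inductive IPath2 (I : Inst) : GTerm → List (ℕ ⊕ ℕ) → GTerm → Prop where
  | nil (t : GTerm) : IPath2 I t [] t
  | fwd {s t u : GTerm} {p : ℕ} {w : List (ℕ ⊕ ℕ)} :
      (⟨p, [s, t]⟩ : GAtom) ∈ I → IPath2 I t w u → IPath2 I s (Sum.inl p :: w) u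
  | bwd {s t u : GTerm} {p : ℕ} {w : List (ℕ ⊕ ℕ)} :
      (⟨p, [t, s]⟩ : GAtom) ∈ I → IPath2 I t w u → IPath2 I s (Sum.inr p :: w) u

/-- Satisfaction of a Boolean 2RPQ given by a regular expression over
`Σ ∪ Σ⁻`. -/
def sat2RPQ (I : Inst) (A : RegularExpression (ℕ ⊕ ℕ)) : Prop :=
  ∃ s t w, s ∈ adom I ∧ t ∈ adom I ∧ IPath2 I s w t ∧ w ∈ A.matches'

/-- Entailment of a Boolean 2RPQ. -/
def entails2RPQ (D : Database) (R : Ruleset) (A : RegularExpression (ℕ ⊕ ℕ)) : Prop :=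
  ∀ I : Inst, isModelOf I D R → sat2RPQ I A

/-- A higher-arity path: an atom `P(t₁, t₂, …, tₙ)` (arity ≥ 2) contributes a
`P`-labelled edge from `t₁` to `t₂`. -/
inductive HPath (I : Inst) : GTerm → List ℕ → GTerm → Prop where
  | nil (t : GTerm) : HPath I t [] t
  | cons {s t u : GTerm} {p : ℕ} {w : List ℕ} (rest : List GTerm) :
      (⟨p, s :: t :: rest⟩ : GAtom) ∈ I → HPath I t w u → HPath I s (p :: w) u

/-- Satisfaction of a Boolean higher-arity RPQ (HRPQ). -/
def satHRPQ (I : Inst) (A : RegularExpression ℕ) : Prop :=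
  ∃ s t w, s ∈ adom I ∧ t ∈ adom I ∧ HPath I s w t ∧ w ∈ A.matches'

/-- Entailment of a Boolean HRPQ. -/
def entailsHRPQ (D : Database) (R : Ruleset) (A : RegularExpression ℕ) : Prop :=
  ∀ I : Inst, isModelOf I D R → satHRPQ I A

/-- A ruleset is finitely RPQ-controllable: every non-entailed Boolean RPQ
has a finite countermodel. -/
def finitelyRPQControllable (R : Ruleset) : Prop :=
  ∀ (A : RegularExpression ℕ) (D : Database),
    ¬ entailsRPQ D R A → ∃ I : Inst, I.Finite ∧ isModelOf I D R ∧ ¬ satRPQ I A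

/-! ### Auxiliary development for Statement 1 -/

def K1 : ℕ := Encodable.encode ((((pSucc, [Sum.inl 0, Sum.inr 0]) : ℕ × List (ℕ ⊕ ℕ)), 0))
def K2 : ℕ := Encodable.encode ((((pGridPoint, [Sum.inl 0, Sum.inl 1, Sum.inr 0]) : ℕ × List (ℕ ⊕ ℕ)), 0))
def K2d : ℕ := Encodable.encode ((((pGridPoint, [Sum.inl 0, Sum.inl 0, Sum.inr 0]) : ℕ × List (ℕ ⊕ ℕ)), 0))

lemma skolem_r1 (h : ℕ → GTerm) :
    skolemAtom ([(pSucc, [0, 1])], (pSucc, [1, 2])) h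
      = ⟨pSucc, [h 1, GTerm.func K1 [h 1]]⟩ := by
  simp [skolemAtom, bodyVarList, K1, List.findIdx, List.findIdx.go, List.dedup_cons_of_notMem,
    List.filterMap_cons, Sum.getRight?_inl, Sum.getRight?_inr, List.dedup_nil]

lemma skolem_r2_off (h : ℕ → GTerm) (hne : h 0 ≠ h 2) :
    skolemAtom ([(pSucc, [0, 1]), (pSucc, [2, 3])], (pGridPoint, [0, 2, 4])) h
      = ⟨pGridPoint, [h 0, h 2, GTerm.func K2 [h 0, h 2]]⟩ := by
  simp [skolemAtom, bodyVarList, K2, List.findIdx, List.findIdx.go,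
    List.dedup_cons_of_notMem, hne, Ne.symm hne,
    List.filterMap_cons, Sum.getRight?_inl, Sum.getRight?_inr, List.dedup_nil]

lemma skolem_r2_diag (h : ℕ → GTerm) (heq : h 0 = h 2) :
    skolemAtom ([(pSucc, [0, 1]), (pSucc, [2, 3])], (pGridPoint, [0, 2, 4])) h
      = ⟨pGridPoint, [h 0, h 0, GTerm.func K2d [h 0]]⟩ := by
  simp [skolemAtom, bodyVarList, K2d, List.findIdx, List.findIdx.go, ← heq,
    List.dedup_cons_of_notMem,
    List.filterMap_cons, Sum.getRight?_inl, Sum.getRight?_inr, List.dedup_nil]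

lemma skolem_r3 (h : ℕ → GTerm) :
    skolemAtom ([(pGridPoint,[0,1,2])], (pXCoord,[2,0])) h = ⟨pXCoord, [h 2, h 0]⟩ := by
  simp [skolemAtom, bodyVarList]

lemma skolem_r4 (h : ℕ → GTerm) :
    skolemAtom ([(pGridPoint,[0,1,2])], (pYCoord,[2,1])) h = ⟨pYCoord, [h 2, h 1]⟩ := by
  simp [skolemAtom, bodyVarList]

lemma skolem_r5 (h : ℕ → GTerm) :
    skolemAtom ([(pXCoord, [3, 0]), (pYCoord, [3, 2]), (pXCoord, [4, 1]), (pYCoord, [4, 2]),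
       (pSucc, [0, 1])], (pIncX, [3, 4])) h = ⟨pIncX, [h 3, h 4]⟩ := by
  simp [skolemAtom, bodyVarList]

lemma skolem_r6 (h : ℕ → GTerm) :
    skolemAtom ([(pXCoord, [3, 0]), (pYCoord, [3, 2]), (pXCoord, [4, 0]), (pYCoord, [4, 5]),
       (pSucc, [2, 5])], (pIncY, [3, 4])) h = ⟨pIncY, [h 3, h 4]⟩ := by
  simp [skolemAtom, bodyVarList]

lemma skolem_r7 (h : ℕ → GTerm) :
    skolemAtom ([(pIncX, [0, 1])], (pDecX, [1, 0])) h = ⟨pDecX, [h 1, h 0]⟩ := by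
  simp [skolemAtom, bodyVarList]

lemma skolem_r8 (h : ℕ → GTerm) :
    skolemAtom ([(pIncY, [0, 1])], (pDecY, [1, 0])) h = ⟨pDecY, [h 1, h 0]⟩ := by
  simp [skolemAtom, bodyVarList]

lemma skolem_r9 (h : ℕ → GTerm) :
    skolemAtom ([(pXCoord, [0, 1]), (pZero, [1])], (pXZero, [0, 0])) h = ⟨pXZero, [h 0, h 0]⟩ := by
  simp [skolemAtom, bodyVarList]

lemma skolem_r10 (h : ℕ → GTerm) :
    skolemAtom ([(pYCoord, [0, 1]), (pZero, [1])], (pYZero, [0, 0])) h = ⟨pYZero, [h 0, h 0]⟩ := by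
  simp [skolemAtom, bodyVarList]

/-- The `n`-th element of the `Succ`-chain in the chase. -/
def nterm : ℕ → GTerm
  | 0 => GTerm.const 0
  | 1 => GTerm.const 1
  | (n+2) => GTerm.func K1 [nterm (n+1)]

def ntval : GTerm → ℕ
  | .const n => n
  | .null _ => 0
  | .func _ [] => 0
  | .func _ (t :: _) => ntval t + 1

lemma ntval_nterm : ∀ n, ntval (nterm n) = n
  | 0 => rfl
  | 1 => rfl
  | (n+2) => by simp [nterm, ntval, ntval_nterm (n+1)]

lemma nterm_inj {m n : ℕ} (h : nterm m = nterm n) : m = n := by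
  rw [← ntval_nterm m, h, ntval_nterm]

/-- The grid point with coordinates `(x, y)` in the chase. -/
def gp (x y : ℕ) : GTerm :=
  if x = y then GTerm.func K2d [nterm x] else GTerm.func K2 [nterm x, nterm y]

lemma gp_inj {x y x' y' : ℕ} (h : gp x y = gp x' y') : x = x' ∧ y = y' := by
  unfold gp at h
  split_ifs at h with h1 h2 h2 <;> simp [GTerm.func.injEq] at h
  · exact ⟨nterm_inj h, by rw [← h1, ← h2, nterm_inj h]⟩
  · exact ⟨nterm_inj h.1, nterm_inj h.2⟩

/-- The explicit description of the chase of `D_grid` under `R_grid`. -/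
def ChaseI : Inst :=
  {α | (∃ n, α = ⟨pSucc, [nterm n, nterm (n+1)]⟩) ∨
       α = ⟨pZero, [nterm 0]⟩ ∨
       (∃ x y, α = ⟨pGridPoint, [nterm x, nterm y, gp x y]⟩) ∨
       (∃ x y, α = ⟨pXCoord, [gp x y, nterm x]⟩) ∨
       (∃ x y, α = ⟨pYCoord, [gp x y, nterm y]⟩) ∨
       (∃ x y, α = ⟨pIncX, [gp x y, gp (x+1) y]⟩) ∨
       (∃ x y, α = ⟨pIncY, [gp x y, gp x (y+1)]⟩) ∨
       (∃ x y, α = ⟨pDecX, [gp (x+1) y, gp x y]⟩) ∨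
       (∃ x y, α = ⟨pDecY, [gp x (y+1), gp x y]⟩) ∨
       (∃ y, α = ⟨pXZero, [gp 0 y, gp 0 y]⟩) ∨
       (∃ x, α = ⟨pYZero, [gp x 0, gp x 0]⟩)}

lemma mem_succ_iff {s t : GTerm} : (⟨pSucc, [s, t]⟩ : GAtom) ∈ ChaseI ↔
    ∃ n, s = nterm n ∧ t = nterm (n+1) := by
  simp [ChaseI, pIncX, pIncY, pDecX, pDecY, pXZero, pYZero, pSucc, pZero, pGridPoint,
    pXCoord, pYCoord]

lemma mem_zero_iff {s : GTerm} {l : List GTerm} : (⟨pZero, s :: l⟩ : GAtom) ∈ ChaseI ↔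
    s = nterm 0 ∧ l = [] := by
  simp [ChaseI, pIncX, pIncY, pDecX, pDecY, pXZero, pYZero, pSucc, pZero, pGridPoint,
    pXCoord, pYCoord]

lemma mem_grid_iff {s t u : GTerm} : (⟨pGridPoint, [s, t, u]⟩ : GAtom) ∈ ChaseI ↔
    ∃ x y, s = nterm x ∧ t = nterm y ∧ u = gp x y := by
  simp [ChaseI, pIncX, pIncY, pDecX, pDecY, pXZero, pYZero, pSucc, pZero, pGridPoint,
    pXCoord, pYCoord]

lemma mem_xcoord_iff {s t : GTerm} : (⟨pXCoord, [s, t]⟩ : GAtom) ∈ ChaseI ↔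
    ∃ x y, s = gp x y ∧ t = nterm x := by
  simp [ChaseI, pIncX, pIncY, pDecX, pDecY, pXZero, pYZero, pSucc, pZero, pGridPoint,
    pXCoord, pYCoord]

lemma mem_ycoord_iff {s t : GTerm} : (⟨pYCoord, [s, t]⟩ : GAtom) ∈ ChaseI ↔
    ∃ x y, s = gp x y ∧ t = nterm y := by
  simp [ChaseI, pIncX, pIncY, pDecX, pDecY, pXZero, pYZero, pSucc, pZero, pGridPoint,
    pXCoord, pYCoord]

lemma mem_incx_iff {s t : GTerm} : (⟨pIncX, [s, t]⟩ : GAtom) ∈ ChaseI ↔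
    ∃ x y, s = gp x y ∧ t = gp (x+1) y := by
  simp [ChaseI, pIncX, pIncY, pDecX, pDecY, pXZero, pYZero, pSucc, pZero, pGridPoint,
    pXCoord, pYCoord]

lemma mem_incy_iff {s t : GTerm} : (⟨pIncY, [s, t]⟩ : GAtom) ∈ ChaseI ↔
    ∃ x y, s = gp x y ∧ t = gp x (y+1) := by
  simp [ChaseI, pIncX, pIncY, pDecX, pDecY, pXZero, pYZero, pSucc, pZero, pGridPoint,
    pXCoord, pYCoord]

lemma mem_decx_iff {s t : GTerm} : (⟨pDecX, [s, t]⟩ : GAtom) ∈ ChaseI ↔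
    ∃ x y, s = gp (x+1) y ∧ t = gp x y := by
  simp [ChaseI, pIncX, pIncY, pDecX, pDecY, pXZero, pYZero, pSucc, pZero, pGridPoint,
    pXCoord, pYCoord]

lemma mem_decy_iff {s t : GTerm} : (⟨pDecY, [s, t]⟩ : GAtom) ∈ ChaseI ↔
    ∃ x y, s = gp x (y+1) ∧ t = gp x y := by
  simp [ChaseI, pIncX, pIncY, pDecX, pDecY, pXZero, pYZero, pSucc, pZero, pGridPoint,
    pXCoord, pYCoord]

lemma mem_xzero_iff {s t : GTerm} : (⟨pXZero, [s, t]⟩ : GAtom) ∈ ChaseI ↔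
    ∃ y, s = gp 0 y ∧ t = gp 0 y := by
  simp [ChaseI, pIncX, pIncY, pDecX, pDecY, pXZero, pYZero, pSucc, pZero, pGridPoint,
    pXCoord, pYCoord]

lemma mem_yzero_iff {s t : GTerm} : (⟨pYZero, [s, t]⟩ : GAtom) ∈ ChaseI ↔
    ∃ x, s = gp x 0 ∧ t = gp x 0 := by
  simp [ChaseI, pIncX, pIncY, pDecX, pDecY, pXZero, pYZero, pSucc, pZero, pGridPoint,
    pXCoord, pYCoord]
/-! ### Chase machinery -/

lemma chaseStage_mono_succ (R : Set ERule) (I : Inst) (n : ℕ) :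
    chaseStage R I n ⊆ chaseStage R I (n+1) := Set.subset_union_left

lemma chaseStage_mono (R : Set ERule) (I : Inst) {n m : ℕ} (h : n ≤ m) :
    chaseStage R I n ⊆ chaseStage R I m := by
  induction h with
  | refl => exact le_refl _
  | step _ ih => exact ih.trans (chaseStage_mono_succ _ _ _)

lemma chaseStage_sub_chase (R : Set ERule) (I : Inst) (n : ℕ) :
    chaseStage R I n ⊆ chase I R := Set.subset_iUnion (chaseStage R I) n

lemma exists_stage_forall {I : Inst} {R : Set ERule} (h : ℕ → GTerm) :
    ∀ l : List PAtom, (∀ a ∈ l, substAtom h a ∈ chase I R) →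
      ∃ n, ∀ a ∈ l, substAtom h a ∈ chaseStage R I n := by
  intro l
  induction l with
  | nil => exact fun _ => ⟨0, by simp⟩
  | cons a l ih =>
    intro hl
    obtain ⟨n1, hn1⟩ : ∃ n, substAtom h a ∈ chaseStage R I n := by
      have := hl a (by simp)
      rwa [chase, Set.mem_iUnion] at this
    obtain ⟨n2, hn2⟩ := ih (fun b hb => hl b (by simp [hb]))
    refine ⟨max n1 n2, ?_⟩
    intro b hb
    rcases List.mem_cons.mp hb with rfl | hb
    · exact chaseStage_mono R I (le_max_left _ _) hn1
    · exact chaseStage_mono R I (le_max_right _ _) (hn2 b hb)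

lemma chase_trigger {I : Inst} {R : Set ERule} {ρ : ERule} (hρ : ρ ∈ R) (h : ℕ → GTerm)
    (hb : ∀ a ∈ ρ.1, substAtom h a ∈ chase I R) : skolemAtom ρ h ∈ chase I R := by
  obtain ⟨n, hn⟩ := exists_stage_forall h ρ.1 hb
  exact chaseStage_sub_chase R I (n+1)
    (Or.inr ⟨ρ, hρ, h, hn, rfl⟩)

/-! ### `chase ⊆ ChaseI` -/

lemma stage_sub_ChaseI : ∀ n, chaseStage (rsSet Rgrid) (dbInst Dgrid) n ⊆ ChaseI := by
  intro n
  induction n with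
  | zero =>
    intro α hα
    simp only [chaseStage, dbInst, Dgrid, Set.mem_setOf_eq, List.mem_cons,
      List.mem_singleton, List.not_mem_nil, or_false] at hα
    rcases hα with ⟨a, (rfl | rfl), rfl⟩
    · exact Or.inl ⟨0, rfl⟩
    · exact Or.inr (Or.inl rfl)
  | succ n IH =>
    intro α hα
    rcases hα with hα | ⟨ρ, hρ, h, hb, rfl⟩
    · exact IH hα
    simp only [rsSet, Rgrid, Set.mem_setOf_eq, List.mem_cons, List.not_mem_nil, or_false] at hρ
    rcases hρ with rfl | rfl | rfl | rfl | rfl | rfl | rfl | rfl | rfl | rfl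
    · -- r1
      have h1 : (⟨pSucc, [h 0, h 1]⟩ : GAtom) ∈ ChaseI := IH (hb (pSucc,[0,1]) (by simp))
      rcases mem_succ_iff.mp h1 with ⟨m, hm0, hm1⟩
      rw [skolem_r1, hm1]
      exact Or.inl ⟨m+1, rfl⟩
    · -- r2
      have h1 : (⟨pSucc, [h 0, h 1]⟩ : GAtom) ∈ ChaseI := IH (hb (pSucc,[0,1]) (by simp))
      have h2 : (⟨pSucc, [h 2, h 3]⟩ : GAtom) ∈ ChaseI := IH (hb (pSucc,[2,3]) (by simp))
      rcases mem_succ_iff.mp h1 with ⟨a, ha0, _⟩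
      rcases mem_succ_iff.mp h2 with ⟨b, hb0, _⟩
      by_cases hab : a = b
      · subst hab
        have heq : h 0 = h 2 := by rw [ha0, hb0]
        rw [skolem_r2_diag h heq, ha0]
        exact Or.inr (Or.inr (Or.inl ⟨a, a, by simp [gp]⟩))
      · have hne : h 0 ≠ h 2 := by
          rw [ha0, hb0]; intro hc; exact hab (nterm_inj hc)
        rw [skolem_r2_off h hne, ha0, hb0]
        exact Or.inr (Or.inr (Or.inl ⟨a, b, by simp [gp, hab]⟩))
    · -- r3
      have h1 : (⟨pGridPoint, [h 0, h 1, h 2]⟩ : GAtom) ∈ ChaseI := IH (hb (pGridPoint,[0,1,2]) (by simp))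
      rcases mem_grid_iff.mp h1 with ⟨x, y, hx, hy, hz⟩
      rw [skolem_r3, hx, hz]
      exact Or.inr (Or.inr (Or.inr (Or.inl ⟨x, y, rfl⟩)))
    · -- r4
      have h1 : (⟨pGridPoint, [h 0, h 1, h 2]⟩ : GAtom) ∈ ChaseI := IH (hb (pGridPoint,[0,1,2]) (by simp))
      rcases mem_grid_iff.mp h1 with ⟨x, y, hx, hy, hz⟩
      rw [skolem_r4, hy, hz]
      exact Or.inr (Or.inr (Or.inr (Or.inr (Or.inl ⟨x, y, rfl⟩))))
    · -- r5 : IncX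
      have hxc1 : (⟨pXCoord, [h 3, h 0]⟩ : GAtom) ∈ ChaseI := IH (hb (pXCoord,[3,0]) (by simp))
      have hyc1 : (⟨pYCoord, [h 3, h 2]⟩ : GAtom) ∈ ChaseI := IH (hb (pYCoord,[3,2]) (by simp))
      have hxc2 : (⟨pXCoord, [h 4, h 1]⟩ : GAtom) ∈ ChaseI := IH (hb (pXCoord,[4,1]) (by simp))
      have hyc2 : (⟨pYCoord, [h 4, h 2]⟩ : GAtom) ∈ ChaseI := IH (hb (pYCoord,[4,2]) (by simp))
      have hs : (⟨pSucc, [h 0, h 1]⟩ : GAtom) ∈ ChaseI := IH (hb (pSucc,[0,1]) (by simp))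
      rcases mem_xcoord_iff.mp hxc1 with ⟨a, b, h3e, h0e⟩
      rcases mem_ycoord_iff.mp hyc1 with ⟨a', b', h3e', h2e⟩
      obtain ⟨rfl, rfl⟩ : a = a' ∧ b = b' := gp_inj (h3e ▸ h3e')
      rcases mem_xcoord_iff.mp hxc2 with ⟨c, d, h4e, h1e⟩
      rcases mem_ycoord_iff.mp hyc2 with ⟨c', d', h4e', h2e'⟩
      obtain ⟨rfl, rfl⟩ : c = c' ∧ d = d' := gp_inj (h4e ▸ h4e')
      have hbd : b = d := nterm_inj (h2e ▸ h2e')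
      rcases mem_succ_iff.mp hs with ⟨m, hm0, hm1⟩
      have ham : a = m := nterm_inj (h0e ▸ hm0)
      have hcm : c = m + 1 := nterm_inj (h1e ▸ hm1)
      rw [skolem_r5, h3e, h4e, hbd, ham, hcm]
      exact Or.inr (Or.inr (Or.inr (Or.inr (Or.inr (Or.inl ⟨m, d, rfl⟩)))))
    · -- r6 : IncY
      have hxc1 : (⟨pXCoord, [h 3, h 0]⟩ : GAtom) ∈ ChaseI := IH (hb (pXCoord,[3,0]) (by simp))
      have hyc1 : (⟨pYCoord, [h 3, h 2]⟩ : GAtom) ∈ ChaseI := IH (hb (pYCoord,[3,2]) (by simp))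
      have hxc2 : (⟨pXCoord, [h 4, h 0]⟩ : GAtom) ∈ ChaseI := IH (hb (pXCoord,[4,0]) (by simp))
      have hyc2 : (⟨pYCoord, [h 4, h 5]⟩ : GAtom) ∈ ChaseI := IH (hb (pYCoord,[4,5]) (by simp))
      have hs : (⟨pSucc, [h 2, h 5]⟩ : GAtom) ∈ ChaseI := IH (hb (pSucc,[2,5]) (by simp))
      rcases mem_xcoord_iff.mp hxc1 with ⟨a, b, h3e, h0e⟩
      rcases mem_ycoord_iff.mp hyc1 with ⟨a', b', h3e', h2e⟩
      obtain ⟨rfl, rfl⟩ : a = a' ∧ b = b' := gp_inj (h3e ▸ h3e')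
      rcases mem_xcoord_iff.mp hxc2 with ⟨c, d, h4e, h0e'⟩
      rcases mem_ycoord_iff.mp hyc2 with ⟨c', d', h4e', h5e⟩
      obtain ⟨rfl, rfl⟩ : c = c' ∧ d = d' := gp_inj (h4e ▸ h4e')
      have hac : a = c := nterm_inj (h0e ▸ h0e')
      rcases mem_succ_iff.mp hs with ⟨m, hm2, hm5⟩
      have hbm : b = m := nterm_inj (h2e ▸ hm2)
      have hdm : d = m + 1 := nterm_inj (h5e ▸ hm5)
      rw [skolem_r6, h3e, h4e, hac, hbm, hdm]
      exact Or.inr (Or.inr (Or.inr (Or.inr (Or.inr (Or.inr (Or.inl ⟨c, m, rfl⟩))))))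
    · -- r7 : DecX
      have h1 : (⟨pIncX, [h 0, h 1]⟩ : GAtom) ∈ ChaseI := IH (hb (pIncX,[0,1]) (by simp))
      rcases mem_incx_iff.mp h1 with ⟨x, y, hx, hy⟩
      rw [skolem_r7, hx, hy]
      exact Or.inr (Or.inr (Or.inr (Or.inr (Or.inr (Or.inr (Or.inr (Or.inl ⟨x, y, rfl⟩)))))))
    · -- r8 : DecY
      have h1 : (⟨pIncY, [h 0, h 1]⟩ : GAtom) ∈ ChaseI := IH (hb (pIncY,[0,1]) (by simp))
      rcases mem_incy_iff.mp h1 with ⟨x, y, hx, hy⟩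
      rw [skolem_r8, hx, hy]
      exact Or.inr (Or.inr (Or.inr (Or.inr (Or.inr (Or.inr (Or.inr (Or.inr (Or.inl ⟨x, y, rfl⟩))))))))
    · -- r9 : XZero
      have h1 : (⟨pXCoord, [h 0, h 1]⟩ : GAtom) ∈ ChaseI := IH (hb (pXCoord,[0,1]) (by simp))
      have h2 : (⟨pZero, [h 1]⟩ : GAtom) ∈ ChaseI := IH (hb (pZero,[1]) (by simp))
      rcases mem_xcoord_iff.mp h1 with ⟨x, y, h0e, h1e⟩
      have hx0 : x = 0 := nterm_inj (h1e ▸ (mem_zero_iff.mp h2).1)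
      subst hx0
      rw [skolem_r9, h0e]
      exact Or.inr (Or.inr (Or.inr (Or.inr (Or.inr (Or.inr (Or.inr (Or.inr (Or.inr (Or.inl ⟨y, rfl⟩)))))))))
    · -- r10 : YZero
      have h1 : (⟨pYCoord, [h 0, h 1]⟩ : GAtom) ∈ ChaseI := IH (hb (pYCoord,[0,1]) (by simp))
      have h2 : (⟨pZero, [h 1]⟩ : GAtom) ∈ ChaseI := IH (hb (pZero,[1]) (by simp))
      rcases mem_ycoord_iff.mp h1 with ⟨x, y, h0e, h1e⟩
      have hy0 : y = 0 := nterm_inj (h1e ▸ (mem_zero_iff.mp h2).1)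
      subst hy0
      rw [skolem_r10, h0e]
      exact Or.inr (Or.inr (Or.inr (Or.inr (Or.inr (Or.inr (Or.inr (Or.inr (Or.inr (Or.inr ⟨x, rfl⟩))))))))) 
/-! ### `ChaseI ⊆ chase` -/

abbrev theChase : Inst := chase (dbInst Dgrid) (rsSet Rgrid)

lemma r1_mem : (([(pSucc, [0, 1])], (pSucc, [1, 2])) : ERule) ∈ rsSet Rgrid := by
  simp [rsSet, Rgrid]
lemma r2_mem : (([(pSucc, [0, 1]), (pSucc, [2, 3])], (pGridPoint, [0, 2, 4])) : ERule) ∈ rsSet Rgrid := by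
  simp [rsSet, Rgrid]
lemma r3_mem : (([(pGridPoint,[0,1,2])], (pXCoord,[2,0])) : ERule) ∈ rsSet Rgrid := by
  simp [rsSet, Rgrid]
lemma r4_mem : (([(pGridPoint,[0,1,2])], (pYCoord,[2,1])) : ERule) ∈ rsSet Rgrid := by
  simp [rsSet, Rgrid]
lemma r5_mem : (([(pXCoord, [3, 0]), (pYCoord, [3, 2]), (pXCoord, [4, 1]), (pYCoord, [4, 2]),
       (pSucc, [0, 1])], (pIncX, [3, 4])) : ERule) ∈ rsSet Rgrid := by
  simp [rsSet, Rgrid]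
lemma r6_mem : (([(pXCoord, [3, 0]), (pYCoord, [3, 2]), (pXCoord, [4, 0]), (pYCoord, [4, 5]),
       (pSucc, [2, 5])], (pIncY, [3, 4])) : ERule) ∈ rsSet Rgrid := by
  simp [rsSet, Rgrid]
lemma r7_mem : (([(pIncX, [0, 1])], (pDecX, [1, 0])) : ERule) ∈ rsSet Rgrid := by
  simp [rsSet, Rgrid]
lemma r8_mem : (([(pIncY, [0, 1])], (pDecY, [1, 0])) : ERule) ∈ rsSet Rgrid := by
  simp [rsSet, Rgrid]
lemma r9_mem : (([(pXCoord, [0, 1]), (pZero, [1])], (pXZero, [0, 0])) : ERule) ∈ rsSet Rgrid := by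
  simp [rsSet, Rgrid]
lemma r10_mem : (([(pYCoord, [0, 1]), (pZero, [1])], (pYZero, [0, 0])) : ERule) ∈ rsSet Rgrid := by
  simp [rsSet, Rgrid]

lemma zero_mem_chase : (⟨pZero, [nterm 0]⟩ : GAtom) ∈ theChase :=
  chaseStage_sub_chase _ _ 0 ⟨(pZero, [0]), by simp [Dgrid], rfl⟩

lemma succ_mem_chase : ∀ n, (⟨pSucc, [nterm n, nterm (n+1)]⟩ : GAtom) ∈ theChase := by
  intro n
  induction n with
  | zero => exact chaseStage_sub_chase _ _ 0 ⟨(pSucc, [0, 1]), by simp [Dgrid], rfl⟩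
  | succ n IH =>
    have hbody : ∀ a ∈ [((pSucc : ℕ), [0, 1])],
        substAtom (fun v => if v = 0 then nterm n else nterm (n+1)) a ∈ theChase := by
      rintro a ha
      simp only [List.mem_singleton] at ha
      subst ha
      exact IH
    have := chase_trigger r1_mem _ hbody
    rw [skolem_r1] at this
    exact this

lemma grid_mem_chase (x y : ℕ) :
    (⟨pGridPoint, [nterm x, nterm y, gp x y]⟩ : GAtom) ∈ theChase := by
  set h : ℕ → GTerm := fun v => [nterm x, nterm (x+1), nterm y, nterm (y+1)].getD v (nterm 0) with hh
  have hbody : ∀ a ∈ [((pSucc : ℕ), [0, 1]), (pSucc, [2, 3])], substAtom h a ∈ theChase := by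
    rintro a ha
    simp only [List.mem_cons, List.mem_singleton, List.not_mem_nil, or_false] at ha
    rcases ha with rfl | rfl
    · exact succ_mem_chase x
    · exact succ_mem_chase y
  have := chase_trigger r2_mem h hbody
  by_cases hxy : x = y
  · have heq : h 0 = h 2 := by simp [hh, hxy]
    rw [skolem_r2_diag h heq] at this
    have : (⟨pGridPoint, [nterm x, nterm x, GTerm.func K2d [nterm x]]⟩ : GAtom) ∈ theChase := this
    subst hxy
    simpa [gp] using ‹(⟨pGridPoint, [nterm x, nterm x, GTerm.func K2d [nterm x]]⟩ : GAtom) ∈ theChase›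
  · have hne : h 0 ≠ h 2 := by
      simp only [hh]; intro hc; exact hxy (nterm_inj hc)
    rw [skolem_r2_off h hne] at this
    have : (⟨pGridPoint, [nterm x, nterm y, GTerm.func K2 [nterm x, nterm y]]⟩ : GAtom) ∈ theChase := this
    simpa [gp, hxy] using this

lemma xcoord_mem_chase (x y : ℕ) : (⟨pXCoord, [gp x y, nterm x]⟩ : GAtom) ∈ theChase := by
  have hbody : ∀ a ∈ [((pGridPoint : ℕ), [0, 1, 2])],
      substAtom (fun v => [nterm x, nterm y, gp x y].getD v (nterm 0)) a ∈ theChase := by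
    rintro a ha
    simp only [List.mem_singleton] at ha
    subst ha
    exact grid_mem_chase x y
  have := chase_trigger r3_mem _ hbody
  rw [skolem_r3] at this
  exact this

lemma ycoord_mem_chase (x y : ℕ) : (⟨pYCoord, [gp x y, nterm y]⟩ : GAtom) ∈ theChase := by
  have hbody : ∀ a ∈ [((pGridPoint : ℕ), [0, 1, 2])],
      substAtom (fun v => [nterm x, nterm y, gp x y].getD v (nterm 0)) a ∈ theChase := by
    rintro a ha
    simp only [List.mem_singleton] at ha
    subst ha
    exact grid_mem_chase x y
  have := chase_trigger r4_mem _ hbody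
  rw [skolem_r4] at this
  exact this

lemma incx_mem_chase (x y : ℕ) : (⟨pIncX, [gp x y, gp (x+1) y]⟩ : GAtom) ∈ theChase := by
  have hbody : ∀ a ∈ [((pXCoord : ℕ), [3, 0]), (pYCoord, [3, 2]), (pXCoord, [4, 1]),
      (pYCoord, [4, 2]), (pSucc, [0, 1])],
      substAtom (fun v => [nterm x, nterm (x+1), nterm y, gp x y, gp (x+1) y].getD v (nterm 0)) a
        ∈ theChase := by
    rintro a ha
    simp only [List.mem_cons, List.mem_singleton, List.not_mem_nil, or_false] at ha
    rcases ha with rfl | rfl | rfl | rfl | rfl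
    · exact xcoord_mem_chase x y
    · exact ycoord_mem_chase x y
    · exact xcoord_mem_chase (x+1) y
    · exact ycoord_mem_chase (x+1) y
    · exact succ_mem_chase x
  have := chase_trigger r5_mem _ hbody
  rw [skolem_r5] at this
  exact this

lemma incy_mem_chase (x y : ℕ) : (⟨pIncY, [gp x y, gp x (y+1)]⟩ : GAtom) ∈ theChase := by
  have hbody : ∀ a ∈ [((pXCoord : ℕ), [3, 0]), (pYCoord, [3, 2]), (pXCoord, [4, 0]),
      (pYCoord, [4, 5]), (pSucc, [2, 5])],
      substAtom (fun v => [nterm x, nterm 0, nterm y, gp x y, gp x (y+1), nterm (y+1)].getD v (nterm 0)) a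
        ∈ theChase := by
    rintro a ha
    simp only [List.mem_cons, List.mem_singleton, List.not_mem_nil, or_false] at ha
    rcases ha with rfl | rfl | rfl | rfl | rfl
    · exact xcoord_mem_chase x y
    · exact ycoord_mem_chase x y
    · exact xcoord_mem_chase x (y+1)
    · exact ycoord_mem_chase x (y+1)
    · exact succ_mem_chase y
  have := chase_trigger r6_mem _ hbody
  rw [skolem_r6] at this
  exact this

lemma decx_mem_chase (x y : ℕ) : (⟨pDecX, [gp (x+1) y, gp x y]⟩ : GAtom) ∈ theChase := by
  have hbody : ∀ a ∈ [((pIncX : ℕ), [0, 1])],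
      substAtom (fun v => [gp x y, gp (x+1) y].getD v (nterm 0)) a ∈ theChase := by
    rintro a ha
    simp only [List.mem_singleton] at ha
    subst ha
    exact incx_mem_chase x y
  have := chase_trigger r7_mem _ hbody
  rw [skolem_r7] at this
  exact this

lemma decy_mem_chase (x y : ℕ) : (⟨pDecY, [gp x (y+1), gp x y]⟩ : GAtom) ∈ theChase := by
  have hbody : ∀ a ∈ [((pIncY : ℕ), [0, 1])],
      substAtom (fun v => [gp x y, gp x (y+1)].getD v (nterm 0)) a ∈ theChase := by
    rintro a ha
    simp only [List.mem_singleton] at ha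
    subst ha
    exact incy_mem_chase x y
  have := chase_trigger r8_mem _ hbody
  rw [skolem_r8] at this
  exact this

lemma xzero_mem_chase (y : ℕ) : (⟨pXZero, [gp 0 y, gp 0 y]⟩ : GAtom) ∈ theChase := by
  have hbody : ∀ a ∈ [((pXCoord : ℕ), [0, 1]), (pZero, [1])],
      substAtom (fun v => [gp 0 y, nterm 0].getD v (nterm 0)) a ∈ theChase := by
    rintro a ha
    simp only [List.mem_cons, List.mem_singleton, List.not_mem_nil, or_false] at ha
    rcases ha with rfl | rfl
    · exact xcoord_mem_chase 0 y
    · exact zero_mem_chase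
  have := chase_trigger r9_mem _ hbody
  rw [skolem_r9] at this
  exact this

lemma yzero_mem_chase (x : ℕ) : (⟨pYZero, [gp x 0, gp x 0]⟩ : GAtom) ∈ theChase := by
  have hbody : ∀ a ∈ [((pYCoord : ℕ), [0, 1]), (pZero, [1])],
      substAtom (fun v => [gp x 0, nterm 0].getD v (nterm 0)) a ∈ theChase := by
    rintro a ha
    simp only [List.mem_cons, List.mem_singleton, List.not_mem_nil, or_false] at ha
    rcases ha with rfl | rfl
    · exact ycoord_mem_chase x 0
    · exact zero_mem_chase
  have := chase_trigger r10_mem _ hbody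
  rw [skolem_r10] at this
  exact this

lemma chase_eq_ChaseI : theChase = ChaseI := by
  apply Set.Subset.antisymm
  · intro α hα
    obtain ⟨S, ⟨n, rfl⟩, hn⟩ := hα
    exact stage_sub_ChaseI n hn
  · rintro α (⟨n, rfl⟩ | rfl | ⟨x, y, rfl⟩ | ⟨x, y, rfl⟩ | ⟨x, y, rfl⟩ | ⟨x, y, rfl⟩ |
      ⟨x, y, rfl⟩ | ⟨x, y, rfl⟩ | ⟨x, y, rfl⟩ | ⟨y, rfl⟩ | ⟨x, rfl⟩)
    · exact succ_mem_chase n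
    · exact zero_mem_chase
    · exact grid_mem_chase x y
    · exact xcoord_mem_chase x y
    · exact ycoord_mem_chase x y
    · exact incx_mem_chase x y
    · exact incy_mem_chase x y
    · exact decx_mem_chase x y
    · exact decy_mem_chase x y
    · exact xzero_mem_chase y
    · exact yzero_mem_chase x
/-! ### Counter-coordinate abstraction and edge lemmas -/

/-- The grid point whose "counter `b`" coordinate is `c` and whose other
coordinate is `o`. -/
def cXY (b : Bool) (c o : ℕ) : GTerm := if b then gp c o else gp o c

lemma gp_cXY (b : Bool) (x y : ℕ) :
    gp x y = cXY b (if b then x else y) (if b then y else x) := by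
  cases b <;> rfl

lemma mem_zero_edge (b : Bool) (v : ℕ) :
    (⟨sZero b, [cXY b 0 v, cXY b 0 v]⟩ : GAtom) ∈ ChaseI := by
  cases b
  · exact Or.inr (Or.inr (Or.inr (Or.inr (Or.inr (Or.inr (Or.inr (Or.inr (Or.inr (Or.inr ⟨v, rfl⟩)))))))))
  · exact Or.inr (Or.inr (Or.inr (Or.inr (Or.inr (Or.inr (Or.inr (Or.inr (Or.inr (Or.inl ⟨v, rfl⟩)))))))))

lemma mem_incr_edge (b : Bool) (u v : ℕ) :
    (⟨sIncr b, [cXY b u v, cXY b (u+1) v]⟩ : GAtom) ∈ ChaseI := by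
  cases b
  · exact Or.inr (Or.inr (Or.inr (Or.inr (Or.inr (Or.inr (Or.inl ⟨v, u, rfl⟩))))))
  · exact Or.inr (Or.inr (Or.inr (Or.inr (Or.inr (Or.inl ⟨u, v, rfl⟩)))))

lemma mem_decr_edge (b : Bool) (u v : ℕ) :
    (⟨sDecr b, [cXY b (u+1) v, cXY b u v]⟩ : GAtom) ∈ ChaseI := by
  cases b
  · exact Or.inr (Or.inr (Or.inr (Or.inr (Or.inr (Or.inr (Or.inr (Or.inr (Or.inl ⟨v, u, rfl⟩))))))))
  · exact Or.inr (Or.inr (Or.inr (Or.inr (Or.inr (Or.inr (Or.inr (Or.inl ⟨u, v, rfl⟩)))))))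

lemma inv_zero_edge {b : Bool} {u v : ℕ} {t : GTerm}
    (h : (⟨sZero b, [cXY b u v, t]⟩ : GAtom) ∈ ChaseI) : u = 0 ∧ t = cXY b u v := by
  cases b
  · rcases mem_yzero_iff.mp h with ⟨x, h1, h2⟩
    obtain ⟨rfl, rfl⟩ := gp_inj h1
    exact ⟨rfl, h2⟩
  · rcases mem_xzero_iff.mp h with ⟨y, h1, h2⟩
    obtain ⟨rfl, rfl⟩ := gp_inj h1
    exact ⟨rfl, h2⟩

lemma inv_incr_edge {b : Bool} {u v : ℕ} {t : GTerm}
    (h : (⟨sIncr b, [cXY b u v, t]⟩ : GAtom) ∈ ChaseI) : t = cXY b (u+1) v := by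
  cases b
  · rcases mem_incy_iff.mp h with ⟨x, y, h1, h2⟩
    obtain ⟨rfl, rfl⟩ := gp_inj h1
    exact h2
  · rcases mem_incx_iff.mp h with ⟨x, y, h1, h2⟩
    obtain ⟨rfl, rfl⟩ := gp_inj h1
    exact h2

lemma inv_decr_edge {b : Bool} {u v : ℕ} {t : GTerm}
    (h : (⟨sDecr b, [cXY b u v, t]⟩ : GAtom) ∈ ChaseI) :
    ∃ u', u = u' + 1 ∧ t = cXY b u' v := by
  cases b
  · rcases mem_decy_iff.mp h with ⟨x, y, h1, h2⟩
    obtain ⟨rfl, rfl⟩ := gp_inj h1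
    exact ⟨y, rfl, h2⟩
  · rcases mem_decx_iff.mp h with ⟨x, y, h1, h2⟩
    obtain ⟨rfl, rfl⟩ := gp_inj h1
    exact ⟨x, rfl, h2⟩

lemma gp_adom (x y : ℕ) : gp x y ∈ adom ChaseI :=
  ⟨⟨pIncX, [gp x y, gp (x+1) y]⟩,
    Or.inr (Or.inr (Or.inr (Or.inr (Or.inr (Or.inl ⟨x, y, rfl⟩))))), by simp⟩

/-! ### DFA transition lemmas -/

lemma sZero_ne_sDecr (b : Bool) : sZero b ≠ sDecr b := by
  cases b <;> simp [sZero, sDecr, pXZero, pYZero, pDecX, pDecY]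

lemma evalFrom_cons (M : TCA) (s : AState M) (a : ℕ) (w : List ℕ) :
    (tcaDFA M).evalFrom s (a :: w) = (tcaDFA M).evalFrom (M.delta s a) w := rfl

lemma eval_none (M : TCA) : ∀ w : List ℕ, (tcaDFA M).evalFrom none w = none := by
  intro w
  induction w with
  | nil => rfl
  | cons a w ih => exact ih

lemma delta_q_zero (M : TCA) (q : M.State) :
    M.delta (some (Sum.inl q)) (sZero (M.cX q)) = some (Sum.inr (q, 0)) := by
  simp [TCA.delta]

lemma delta_q_decr (M : TCA) (q : M.State) :
    M.delta (some (Sum.inl q)) (sDecr (M.cX q)) = some (Sum.inr (q, 2)) := by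
  simp [TCA.delta, (sZero_ne_sDecr (M.cX q)).symm]

lemma delta_q_none (M : TCA) (q : M.State) {p : ℕ} (h1 : p ≠ sZero (M.cX q))
    (h2 : p ≠ sDecr (M.cX q)) : M.delta (some (Sum.inl q)) p = none := by
  simp [TCA.delta, h1, h2]

lemma delta_0_zero (M : TCA) (q : M.State) :
    M.delta (some (Sum.inr (q, 0))) (sZero (M.cX q)) = some (Sum.inr (q, 1)) := by
  simp [TCA.delta]

lemma delta_0_none (M : TCA) (q : M.State) {p : ℕ} (h1 : p ≠ sZero (M.cX q)) :
    M.delta (some (Sum.inr (q, 0))) p = none := by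
  simp [TCA.delta, h1]

lemma delta_1_incr (M : TCA) (q : M.State) :
    M.delta (some (Sum.inr (q, 1))) (sIncr (M.cX q)) = some (Sum.inl (M.qt q)) := by
  simp [TCA.delta]

lemma delta_1_none (M : TCA) (q : M.State) {p : ℕ} (h1 : p ≠ sIncr (M.cX q)) :
    M.delta (some (Sum.inr (q, 1))) p = none := by
  simp [TCA.delta, h1]

lemma delta_2_incr (M : TCA) (q : M.State) :
    M.delta (some (Sum.inr (q, 2))) (sIncr (M.cX q)) = some (Sum.inr (q, 3)) := by
  simp [TCA.delta]

lemma delta_2_none (M : TCA) (q : M.State) {p : ℕ} (h1 : p ≠ sIncr (M.cX q)) :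
    M.delta (some (Sum.inr (q, 2))) p = none := by
  simp [TCA.delta, h1]

lemma delta_3_d (M : TCA) (q : M.State) :
    M.delta (some (Sum.inr (q, 3)))
      (if M.dPlus q then sIncr (M.cX q) else sDecr (M.cX q)) = some (Sum.inl (M.qf q)) := by
  simp [TCA.delta]

lemma delta_3_none (M : TCA) (q : M.State) {p : ℕ}
    (h1 : p ≠ (if M.dPlus q then sIncr (M.cX q) else sDecr (M.cX q))) :
    M.delta (some (Sum.inr (q, 3))) p = none := by
  simp [TCA.delta, h1]

/-! ### Step lemmas -/

lemma step_zero (M : TCA) (q : M.State) (x y : ℕ) (hU : (if M.cX q then x else y) = 0) :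
    ∃ x' y', M.step (q, x, y) = (M.qt q, x', y') ∧
      gp x' y' = cXY (M.cX q) 1 (if M.cX q then y else x) := by
  cases hb : M.cX q
  · rw [hb] at hU; simp at hU
    exact ⟨x, 1, by simp [TCA.step, hb, hU], by simp [hb, cXY]⟩
  · rw [hb] at hU; simp at hU
    exact ⟨1, y, by simp [TCA.step, hb, hU], by simp [hb, cXY]⟩

lemma step_pos (M : TCA) (q : M.State) (x y u : ℕ) (hU : (if M.cX q then x else y) = u + 1) :
    ∃ x' y', M.step (q, x, y) = (M.qf q, x', y') ∧
      gp x' y' = cXY (M.cX q) (if M.dPlus q then u + 2 else u) (if M.cX q then y else x) := by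
  cases hb : M.cX q
  · rw [hb] at hU; simp at hU
    subst hU
    refine ⟨x, if M.dPlus q then u + 2 else u, by simp [TCA.step, hb], ?_⟩
    cases hd : M.dPlus q <;> simp [hd, cXY, hb]
  · rw [hb] at hU; simp at hU
    subst hU
    refine ⟨if M.dPlus q then u + 2 else u, y, by simp [TCA.step, hb], ?_⟩
    cases hd : M.dPlus q <;> simp [hd, cXY, hb]
/-! ### Simulation lemmas -/

lemma sim_fwd (M : TCA) :
    ∀ n (w : List ℕ), w.length ≤ n → ∀ (q : M.State) (x y : ℕ) (t : GTerm),
      IPath ChaseI (gp x y) w t →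
      (tcaDFA M).evalFrom (some (Sum.inl q)) w = some (Sum.inl M.qhalt) →
      ∃ k, ((M.step)^[k] (q, x, y)).1 = M.qhalt := by
  intro n
  induction n with
  | zero =>
    intro w hw q x y t hP he
    rw [List.length_eq_zero_iff.mp (Nat.le_zero.mp hw)] at he
    simp only [DFA.evalFrom_nil, Option.some.injEq, Sum.inl.injEq] at he
    exact ⟨0, by simpa using he⟩
  | succ n ih =>
    intro w hw q x y t hP he
    cases hP with
    | nil =>
      simp only [DFA.evalFrom_nil, Option.some.injEq, Sum.inl.injEq] at he
      exact ⟨0, by simpa using he⟩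
    | @cons _ t1 _ p1 w1 e1 hP1 =>
      rw [evalFrom_cons] at he
      rw [gp_cXY (M.cX q) x y] at e1
      by_cases hz1 : p1 = sZero (M.cX q)
      · subst hz1
        rw [delta_q_zero] at he
        obtain ⟨hU0, ht1⟩ := inv_zero_edge e1
        rw [hU0] at ht1
        cases hP1 with
        | nil => rw [DFA.evalFrom_nil] at he; simp at he
        | @cons _ t2 _ p2 w2 e2 hP2 =>
          rw [evalFrom_cons] at he
          rw [ht1] at e2
          by_cases hz2 : p2 = sZero (M.cX q)
          · subst hz2
            rw [delta_0_zero] at he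
            obtain ⟨-, ht2⟩ := inv_zero_edge e2
            cases hP2 with
            | nil => rw [DFA.evalFrom_nil] at he; simp at he
            | @cons _ t3 _ p3 w3 e3 hP3 =>
              rw [evalFrom_cons] at he
              rw [ht2] at e3
              by_cases hi3 : p3 = sIncr (M.cX q)
              · subst hi3
                rw [delta_1_incr] at he
                have ht3 := inv_incr_edge e3
                obtain ⟨x', y', hstep, hgp⟩ := step_zero M q x y hU0
                rw [ht3, ← hgp] at hP3
                have hlen : w3.length ≤ n := by
                  simp only [List.length_cons] at hw; omega
                obtain ⟨k, hk⟩ := ih w3 hlen (M.qt q) x' y' t hP3 he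
                exact ⟨k + 1, by rw [Function.iterate_succ_apply, hstep]; exact hk⟩
              · rw [delta_1_none M q hi3, eval_none] at he; simp at he
          · rw [delta_0_none M q hz2, eval_none] at he; simp at he
      · by_cases hd1 : p1 = sDecr (M.cX q)
        · subst hd1
          rw [delta_q_decr] at he
          obtain ⟨u', hU', ht1⟩ := inv_decr_edge e1
          cases hP1 with
          | nil => rw [DFA.evalFrom_nil] at he; simp at he
          | @cons _ t2 _ p2 w2 e2 hP2 =>
            rw [evalFrom_cons] at he
            rw [ht1] at e2
            by_cases hi2 : p2 = sIncr (M.cX q)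
            · subst hi2
              rw [delta_2_incr] at he
              have ht2 := inv_incr_edge e2
              cases hP2 with
              | nil => rw [DFA.evalFrom_nil] at he; simp at he
              | @cons _ t3 _ p3 w3 e3 hP3 =>
                rw [evalFrom_cons] at he
                rw [ht2] at e3
                by_cases hi3 : p3 = (if M.dPlus q then sIncr (M.cX q) else sDecr (M.cX q))
                · subst hi3
                  rw [delta_3_d] at he
                  obtain ⟨x', y', hstep, hgp⟩ := step_pos M q x y u' hU'
                  have ht3 : t3 = gp x' y' := by
                    cases hdp : M.dPlus q
                    · rw [hdp] at e3; simp only [Bool.false_eq_true, if_false] at e3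
                      obtain ⟨u'', hu'', ht3'⟩ := inv_decr_edge e3
                      have : u'' = u' := by omega
                      rw [hgp, hdp, ht3', this]
                      simp
                    · rw [hdp] at e3; simp only [if_true] at e3
                      have ht3' := inv_incr_edge e3
                      rw [hgp, hdp, ht3']
                      simp
                  rw [ht3] at hP3
                  have hlen : w3.length ≤ n := by
                    simp only [List.length_cons] at hw; omega
                  obtain ⟨k, hk⟩ := ih w3 hlen (M.qf q) x' y' t hP3 he
                  exact ⟨k + 1, by rw [Function.iterate_succ_apply, hstep]; exact hk⟩
                · rw [delta_3_none M q hi3, eval_none] at he; simp at he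
            · rw [delta_2_none M q hi2, eval_none] at he; simp at he
        · rw [delta_q_none M q hz1 hd1, eval_none] at he; simp at he

lemma sim_bwd (M : TCA) : ∀ (k : ℕ) (q : M.State) (x y : ℕ),
    ((M.step)^[k] (q, x, y)).1 = M.qhalt →
    ∃ (w : List ℕ) (x' y' : ℕ), IPath ChaseI (gp x y) w (gp x' y') ∧
      (tcaDFA M).evalFrom (some (Sum.inl q)) w = some (Sum.inl M.qhalt) := by
  intro k
  induction k with
  | zero =>
    intro q x y h
    simp only [Function.iterate_zero, id_eq] at h
    exact ⟨[], x, y, IPath.nil _, by rw [show q = M.qhalt from h]; rfl⟩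
  | succ k ih =>
    intro q x y h
    rw [Function.iterate_succ_apply] at h
    by_cases hU : (if M.cX q then x else y) = 0
    · obtain ⟨x', y', hstep, hgp⟩ := step_zero M q x y hU
      rw [hstep] at h
      obtain ⟨w, a, b, hP, he⟩ := ih (M.qt q) x' y' h
      have h0 : gp x y = cXY (M.cX q) 0 (if M.cX q then y else x) := by
        rw [gp_cXY (M.cX q) x y, hU]
      refine ⟨sZero (M.cX q) :: sZero (M.cX q) :: sIncr (M.cX q) :: w, a, b, ?_, ?_⟩
      · refine IPath.cons (t := cXY (M.cX q) 0 (if M.cX q then y else x)) ?_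
          (IPath.cons (t := cXY (M.cX q) 0 (if M.cX q then y else x)) ?_ (IPath.cons ?_ hP))
        · rw [h0]; exact mem_zero_edge _ _
        · exact mem_zero_edge _ _
        · rw [hgp]
          have := mem_incr_edge (M.cX q) 0 (if M.cX q then y else x)
          simpa using this
      · rw [evalFrom_cons, delta_q_zero, evalFrom_cons, delta_0_zero, evalFrom_cons, delta_1_incr]
        exact he
    · obtain ⟨u', hU'⟩ : ∃ u', (if M.cX q then x else y) = u' + 1 :=
        ⟨(if M.cX q then x else y) - 1, by omega⟩
      obtain ⟨x', y', hstep, hgp⟩ := step_pos M q x y u' hU'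
      rw [hstep] at h
      obtain ⟨w, a, b, hP, he⟩ := ih (M.qf q) x' y' h
      have h0 : gp x y = cXY (M.cX q) (u' + 1) (if M.cX q then y else x) := by
        rw [gp_cXY (M.cX q) x y, hU']
      refine ⟨sDecr (M.cX q) :: sIncr (M.cX q) ::
        (if M.dPlus q then sIncr (M.cX q) else sDecr (M.cX q)) :: w, a, b, ?_, ?_⟩
      · refine IPath.cons (t := cXY (M.cX q) u' (if M.cX q then y else x)) ?_
          (IPath.cons (t := cXY (M.cX q) (u' + 1) (if M.cX q then y else x)) ?_
            (IPath.cons ?_ hP))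
        · rw [h0]; exact mem_decr_edge _ _ _
        · exact mem_incr_edge _ _ _
        · rw [hgp]
          cases hdp : M.dPlus q
          · simp only [Bool.false_eq_true, if_false]
            exact mem_decr_edge _ _ _
          · simp only [if_true]
            have := mem_incr_edge (M.cX q) (u' + 1) (if M.cX q then y else x)
            simpa [add_assoc] using this
      · rw [evalFrom_cons, delta_q_decr, evalFrom_cons, delta_2_incr, evalFrom_cons, delta_3_d]
        exact he
/-! ### Language decomposition -/

lemma lang_decomp (A : RegularExpression ℕ) (w : List ℕ) :
    w ∈ (RegularExpression.char pXZero * RegularExpression.char pYZero * A).matches' ↔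
    ∃ w', w = pXZero :: pYZero :: w' ∧ w' ∈ A.matches' := by
  rw [RegularExpression.matches'_mul, RegularExpression.matches'_mul,
    RegularExpression.matches'_char, RegularExpression.matches'_char]
  constructor
  · intro h
    rw [Language.mem_mul] at h
    obtain ⟨u, hu, v, hv, hw⟩ := h
    rw [Language.mem_mul] at hu
    obtain ⟨u1, hu1, u2, hu2, hu12⟩ := hu
    have hu1' : u1 = [pXZero] := hu1
    have hu2' : u2 = [pYZero] := hu2
    subst hu1'; subst hu2'; subst hu12
    exact ⟨v, hw.symm, hv⟩
  · rintro ⟨w', rfl, hw'⟩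
    rw [Language.mem_mul]
    refine ⟨[pXZero, pYZero], ?_, w', hw', rfl⟩
    rw [Language.mem_mul]
    exact ⟨[pXZero], rfl, [pYZero], rfl, rfl⟩

/-- For every two-counter automaton `M`:
`chase(D_grid, R_grid) ⊨ Q_M` iff `M` halts from the configuration `(q0,0,0)`,
where `Q_M = ∃x,y (XZero · YZero · A)(x,y)` and `A` is any regular expression
with the same language as the DFA `A_M`. -/
theorem chase_grid_entails_QM_iff_halts (M : TCA) (A : RegularExpression ℕ)
    (hA : A.matches' = (tcaDFA M).accepts) :
    satRPQ (chase (dbInst Dgrid) (rsSet Rgrid))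
      (RegularExpression.char pXZero * RegularExpression.char pYZero * A) ↔
    M.Halts := by
  have hc : chase (dbInst Dgrid) (rsSet Rgrid) = ChaseI := chase_eq_ChaseI
  unfold satRPQ satLang; rw [hc]
  constructor
  · rintro ⟨s, t, w, hs, ht, hP, hw⟩
    obtain ⟨w', rfl, hw'⟩ := (lang_decomp A w).mp hw
    cases hP with
    | @cons _ t1 _ _ _ e1 hP1 =>
      rcases mem_xzero_iff.mp e1 with ⟨y0, rfl, rfl⟩
      cases hP1 with
      | @cons _ t2 _ _ _ e2 hP2 =>
        rcases mem_yzero_iff.mp e2 with ⟨x1, hgp1, ht2⟩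
        obtain ⟨h1, h2⟩ := gp_inj hgp1
        subst h2
        rw [ht2, ← h1] at hP2
        have heval : (tcaDFA M).evalFrom (some (Sum.inl M.q0)) w' = some (Sum.inl M.qhalt) := by
          rw [hA] at hw'
          have h2 := ((tcaDFA M).mem_accepts).mp hw'
          exact h2
        obtain ⟨k, hk⟩ := sim_fwd M w'.length w' le_rfl M.q0 0 0 t hP2 heval
        exact ⟨k, hk⟩
  · rintro ⟨k, hk⟩
    obtain ⟨w, a, b, hP, he⟩ := sim_bwd M k M.q0 0 0 hk
    refine ⟨gp 0 0, gp a b, pXZero :: pYZero :: w, gp_adom 0 0, gp_adom a b, ?_, ?_⟩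
    · refine IPath.cons (t := gp 0 0) ?_ (IPath.cons (t := gp 0 0) ?_ hP)
      · exact mem_xzero_iff.mpr ⟨0, rfl, rfl⟩
      · exact mem_yzero_iff.mpr ⟨0, rfl, rfl⟩
    · refine (lang_decomp A _).mpr ⟨w, rfl, ?_⟩
      rw [hA]
      exact ((tcaDFA M).mem_accepts).mpr
        (by rw [show (tcaDFA M).eval w = some (Sum.inl M.qhalt) from he]; rfl)
end
end

section
/- For all natural numbers x, x', y, y' and all states q, q' of the two-counter automaton M, the following are equivalent: (1) the DFA A_M, walking on the grid instance G, transitions from configuration (x, y, q) to configuration (x', y', q') in exactly three steps; (2) the TCA M transitions from configuration (q, x, y) to configuration (q', x', y') in one step. -/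
set_option maxHeartbeats 1000000

noncomputable section

open Classical

lemma mem_incX (a b : ℕ) : (⟨pIncX, [gpt a b, gpt (a+1) b]⟩ : GAtom) ∈ GridInst :=
  Or.inl ⟨a, b, rfl⟩

lemma mem_incY (a b : ℕ) : (⟨pIncY, [gpt a b, gpt a (b+1)]⟩ : GAtom) ∈ GridInst :=
  Or.inr (Or.inl ⟨a, b, rfl⟩)

lemma mem_decX (a b : ℕ) : (⟨pDecX, [gpt (a+1) b, gpt a b]⟩ : GAtom) ∈ GridInst :=
  Or.inr (Or.inr (Or.inl ⟨a, b, rfl⟩))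

lemma mem_decY (a b : ℕ) : (⟨pDecY, [gpt a (b+1), gpt a b]⟩ : GAtom) ∈ GridInst :=
  Or.inr (Or.inr (Or.inr (Or.inl ⟨a, b, rfl⟩)))

lemma mem_xzero (b : ℕ) : (⟨pXZero, [gpt 0 b, gpt 0 b]⟩ : GAtom) ∈ GridInst :=
  Or.inr (Or.inr (Or.inr (Or.inr (Or.inl ⟨b, rfl⟩))))

lemma mem_yzero (a : ℕ) : (⟨pYZero, [gpt a 0, gpt a 0]⟩ : GAtom) ∈ GridInst :=
  Or.inr (Or.inr (Or.inr (Or.inr (Or.inr ⟨a, rfl⟩))))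

lemma gpt_inj {a b c d : ℕ} : gpt a b = gpt c d ↔ a = c ∧ b = d := by
  simp [gpt]

/-- For all naturals `x, x', y, y'` and states `q, q'` of the
TCA `M`: the DFA `A_M`, walking on the grid instance `G`, transitions from
configuration `(x, y, q)` to `(x', y', q')` in exactly three steps iff `M`
transitions from `(q, x, y)` to `(q', x', y')` in one step. -/
theorem walk_three_steps_iff_tca_step (M : TCA) (x x' y y' : ℕ) (q q' : M.State) :
    (∃ c₁ c₂ : AState M × GTerm,
      walkStep M GridInst (some (Sum.inl q), gpt x y) c₁ ∧
      walkStep M GridInst c₁ c₂ ∧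
      walkStep M GridInst c₂ (some (Sum.inl q'), gpt x' y')) ↔
    M.step (q, x, y) = (q', x', y') := by
  constructor
  · rintro ⟨⟨s₁,t₁⟩,⟨s₂,t₂⟩,⟨p₁,hm₁,hd₁⟩,⟨p₂,hm₂,hd₂⟩,⟨p₃,hm₃,hd₃⟩⟩
    simp only at hm₁ hd₁ hm₂ hd₂ hm₃ hd₃
    cases hb : M.cX q
    · simp [TCA.delta, hb, sZero, sDecr, sIncr, pYZero, pDecY, pIncY] at hd₁
      split_ifs at hd₁ with h1 h2
      · -- then branch: p₁ = YZero
        subst h1; subst hd₁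
        simp [GridInst, pIncX, pIncY, pDecX, pDecY, pXZero, pYZero, gpt_inj] at hm₁
        obtain ⟨hy, ht⟩ := hm₁
        subst hy; subst ht
        simp [TCA.delta, hb, sZero, sDecr, sIncr, pYZero, pDecY, pIncY] at hd₂
        split_ifs at hd₂ with h2
        · subst h2; subst hd₂
          simp [GridInst, pIncX, pIncY, pDecX, pDecY, pXZero, pYZero, gpt_inj] at hm₂
          subst hm₂
          simp [TCA.delta, hb, sZero, sDecr, sIncr, pYZero, pDecY, pIncY] at hd₃
          obtain ⟨hp3, hq⟩ := hd₃
          subst hp3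
          simp [GridInst, pIncX, pIncY, pDecX, pDecY, pXZero, pYZero, gpt_inj] at hm₃
          obtain ⟨hx', hy'⟩ := hm₃
          subst hx'; subst hy'
          simp [TCA.step, hb, ← hq]
        · subst hd₂; simp [TCA.delta] at hd₃
      · -- else branch: p₁ = DecY
        subst h2; subst hd₁
        simp [GridInst, pIncX, pIncY, pDecX, pDecY, pXZero, pYZero, gpt_inj] at hm₁
        obtain ⟨y₁, hy, ht⟩ := hm₁
        subst hy; subst ht
        simp [TCA.delta, hb, sZero, sDecr, sIncr, pYZero, pDecY, pIncY] at hd₂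
        split_ifs at hd₂ with h2'
        · subst h2'; subst hd₂
          simp [GridInst, pIncX, pIncY, pDecX, pDecY, pXZero, pYZero, gpt_inj] at hm₂
          subst hm₂
          cases hdp : M.dPlus q
          · simp [TCA.delta, hb, hdp, sZero, sDecr, sIncr, pYZero, pDecY, pIncY] at hd₃
            obtain ⟨hp3, hq⟩ := hd₃
            subst hp3
            simp [GridInst, pIncX, pIncY, pDecX, pDecY, pXZero, pYZero, gpt_inj] at hm₃
            obtain ⟨hx', hy'⟩ := hm₃
            subst hx'; subst hy'
            simp [TCA.step, hb, hdp, ← hq]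
          · simp [TCA.delta, hb, hdp, sZero, sDecr, sIncr, pYZero, pDecY, pIncY] at hd₃
            obtain ⟨hp3, hq⟩ := hd₃
            subst hp3
            simp [GridInst, pIncX, pIncY, pDecX, pDecY, pXZero, pYZero, gpt_inj] at hm₃
            obtain ⟨hx', hy'⟩ := hm₃
            subst hx'; subst hy'
            simp [TCA.step, hb, hdp, ← hq]
        · subst hd₂; simp [TCA.delta] at hd₃
      · subst hd₁
        simp only [TCA.delta] at hd₂
        subst hd₂
        simp [TCA.delta] at hd₃
    · simp only [TCA.delta, hb, sZero, sDecr, sIncr, pXZero, pDecX, pIncX, if_true] at hd₁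
      split_ifs at hd₁ with h1 h2
      · -- then branch: p₁ = XZero
        subst h1; subst hd₁
        simp [GridInst, pIncX, pIncY, pDecX, pDecY, pXZero, pYZero, gpt_inj] at hm₁
        obtain ⟨hx, ht⟩ := hm₁
        subst hx; subst ht
        simp [TCA.delta, hb, sZero, sDecr, sIncr, pXZero, pDecX, pIncX] at hd₂
        split_ifs at hd₂ with h2
        · subst h2; subst hd₂
          simp [GridInst, pIncX, pIncY, pDecX, pDecY, pXZero, pYZero, gpt_inj] at hm₂
          subst hm₂
          simp [TCA.delta, hb, sZero, sDecr, sIncr, pXZero, pDecX, pIncX] at hd₃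
          obtain ⟨hp3, hq⟩ := hd₃
          subst hp3
          simp [GridInst, pIncX, pIncY, pDecX, pDecY, pXZero, pYZero, gpt_inj] at hm₃
          obtain ⟨hy', hx'⟩ := hm₃
          subst hy'; subst hx'
          simp [TCA.step, hb, ← hq]
        · subst hd₂; simp [TCA.delta] at hd₃
      · -- else branch: p₁ = DecX
        subst h2; subst hd₁
        simp [GridInst, pIncX, pIncY, pDecX, pDecY, pXZero, pYZero, gpt_inj] at hm₁
        obtain ⟨x₁, hx, ht⟩ := hm₁
        subst hx; subst ht
        simp [TCA.delta, hb, sZero, sDecr, sIncr, pXZero, pDecX, pIncX] at hd₂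
        split_ifs at hd₂ with h2'
        · subst h2'; subst hd₂
          simp [GridInst, pIncX, pIncY, pDecX, pDecY, pXZero, pYZero, gpt_inj] at hm₂
          subst hm₂
          cases hdp : M.dPlus q
          · simp [TCA.delta, hb, hdp, sZero, sDecr, sIncr, pXZero, pDecX, pIncX] at hd₃
            obtain ⟨hp3, hq⟩ := hd₃
            subst hp3
            simp [GridInst, pIncX, pIncY, pDecX, pDecY, pXZero, pYZero, gpt_inj] at hm₃
            obtain ⟨hx', hy'⟩ := hm₃
            subst hx'; subst hy'
            simp [TCA.step, hb, hdp, ← hq]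
          · simp [TCA.delta, hb, hdp, sZero, sDecr, sIncr, pXZero, pDecX, pIncX] at hd₃
            obtain ⟨hp3, hq⟩ := hd₃
            subst hp3
            simp [GridInst, pIncX, pIncY, pDecX, pDecY, pXZero, pYZero, gpt_inj] at hm₃
            obtain ⟨hx', hy'⟩ := hm₃
            subst hx'; subst hy'
            simp [TCA.step, hb, hdp, ← hq]
        · subst hd₂; simp [TCA.delta] at hd₃
      · subst hd₁
        simp only [TCA.delta] at hd₂
        subst hd₂
        simp [TCA.delta] at hd₃
  · intro h
    cases hb : M.cX q
    · -- counter y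
      cases hy : y with
      | zero =>
        simp [TCA.step, hb, hy, Prod.ext_iff] at h
        obtain ⟨hq, hx', hy'⟩ := h
        subst hy; subst hx'; subst hy'
        refine ⟨(some (Sum.inr (q, 0)), gpt x 0), (some (Sum.inr (q, 1)), gpt x 0),
          ⟨pYZero, mem_yzero x, ?_⟩, ⟨pYZero, mem_yzero x, ?_⟩,
          ⟨pIncY, mem_incY x 0, ?_⟩⟩ <;>
          simp [TCA.delta, hb, sZero, sIncr, pYZero, pIncY, hq]
      | succ k =>
        subst hy
        cases hdp : M.dPlus q <;>
          simp [TCA.step, hb, hdp, Prod.ext_iff] at h <;>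
          obtain ⟨hq, hx', hy'⟩ := h <;>
          subst hx' <;> subst hy'
        · refine ⟨(some (Sum.inr (q, 2)), gpt x k), (some (Sum.inr (q, 3)), gpt x (k+1)),
            ⟨pDecY, mem_decY x k, ?_⟩, ⟨pIncY, mem_incY x k, ?_⟩,
            ⟨pDecY, mem_decY x k, ?_⟩⟩ <;>
            simp [TCA.delta, hb, hdp, sZero, sDecr, sIncr, pYZero, pDecY, pIncY, hq]
        · refine ⟨(some (Sum.inr (q, 2)), gpt x k), (some (Sum.inr (q, 3)), gpt x (k+1)),
            ⟨pDecY, mem_decY x k, ?_⟩, ⟨pIncY, mem_incY x k, ?_⟩,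
            ⟨pIncY, mem_incY x (k+1), ?_⟩⟩ <;>
            simp [TCA.delta, hb, hdp, sZero, sDecr, sIncr, pYZero, pDecY, pIncY, hq]
    · -- counter x
      cases hx : x with
      | zero =>
        simp [TCA.step, hb, hx, Prod.ext_iff] at h
        obtain ⟨hq, hx', hy'⟩ := h
        subst hx; subst hx'; subst hy'
        refine ⟨(some (Sum.inr (q, 0)), gpt 0 y), (some (Sum.inr (q, 1)), gpt 0 y),
          ⟨pXZero, mem_xzero y, ?_⟩, ⟨pXZero, mem_xzero y, ?_⟩,
          ⟨pIncX, mem_incX 0 y, ?_⟩⟩ <;>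
          simp [TCA.delta, hb, sZero, sIncr, pXZero, pIncX, hq]
      | succ k =>
        subst hx
        cases hdp : M.dPlus q <;>
          simp [TCA.step, hb, hdp, Prod.ext_iff] at h <;>
          obtain ⟨hq, hx', hy'⟩ := h <;>
          subst hx' <;> subst hy'
        · refine ⟨(some (Sum.inr (q, 2)), gpt k y), (some (Sum.inr (q, 3)), gpt (k+1) y),
            ⟨pDecX, mem_decX k y, ?_⟩, ⟨pIncX, mem_incX k y, ?_⟩,
            ⟨pDecX, mem_decX k y, ?_⟩⟩ <;>
            simp [TCA.delta, hb, hdp, sZero, sDecr, sIncr, pXZero, pDecX, pIncX, hq]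
        · refine ⟨(some (Sum.inr (q, 2)), gpt k y), (some (Sum.inr (q, 3)), gpt (k+1) y),
            ⟨pDecX, mem_decX k y, ?_⟩, ⟨pIncX, mem_incX k y, ?_⟩,
            ⟨pIncX, mem_incX (k+1) y, ?_⟩⟩ <;>
            simp [TCA.delta, hb, hdp, sZero, sDecr, sIncr, pXZero, pDecX, pIncX, hq]
end
end

section
/- Let I be an instance with terms s and t, and let ρ be a joinless existential rule. If I satisfies ρ then I[s,t ↦ u] satisfies ρ. -/
set_option maxHeartbeats 1000000

noncomputable section

open Classical

private lemma bvl_count (v : ℕ) (l : List PAtom) :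
    (l.foldr (fun a r => a.2 ++ r) []).count v = (l.map (fun a => a.2.count v)).sum := by
  induction l with
  | nil => simp
  | cons a l ih => simp only [List.foldr_cons, List.count_append, ih, List.map_cons, List.sum_cons]

private lemma bvl_mem (v : ℕ) (l : List PAtom) :
    v ∈ l.foldr (fun a r => a.2 ++ r) [] ↔ ∃ a ∈ l, v ∈ a.2 := by
  induction l with
  | nil => simp
  | cons a l ih => simp only [List.foldr_cons, List.mem_append, ih, List.mem_cons, exists_eq_or_imp]

private lemma sum_two_le {f : PAtom → ℕ} {a b : PAtom} :
    ∀ l : List PAtom, a ∈ l → b ∈ l → a ≠ b → f a + f b ≤ (l.map f).sum := by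
  intro l
  induction l with
  | nil => simp
  | cons c l ih =>
    intro ha hb hab
    rcases List.mem_cons.1 ha with ha | ha
    · have hb' : b ∈ l := by
        rcases List.mem_cons.1 hb with hb | hb
        · exact absurd (hb.trans ha.symm) (Ne.symm hab)
        · exact hb
      have h1 : f b ≤ (l.map f).sum :=
        List.single_le_sum (fun x _ => Nat.zero_le x) _ (List.mem_map_of_mem (f := f) hb')
      subst ha
      simp only [List.map_cons, List.sum_cons]
      omega
    · rcases List.mem_cons.1 hb with hb | hb
      · have h1 : f a ≤ (l.map f).sum :=
          List.single_le_sum (fun x _ => Nat.zero_le x) _ (List.mem_map_of_mem (f := f) ha)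
        subst hb
        simp only [List.map_cons, List.sum_cons]
        omega
      · have := ih ha hb hab
        simp only [List.map_cons, List.sum_cons]
        omega

private lemma two_le_count_of_getElem? {v : ℕ} :
    ∀ (l : List ℕ) (i j : ℕ), l[i]? = some v → l[j]? = some v → i ≠ j → 2 ≤ l.count v := by
  intro l
  induction l with
  | nil => intro i j hi; simp at hi
  | cons x l ih =>
    intro i j hi hj hij
    match i, j with
    | 0, 0 => exact absurd rfl hij
    | 0, j + 1 =>
      simp only [List.getElem?_cons_zero, Option.some.injEq] at hi
      simp only [List.getElem?_cons_succ] at hj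
      have hv : 0 < l.count v := List.count_pos_iff.2 (List.mem_of_getElem? hj)
      simp only [List.count_cons, hi]
      simp only [beq_self_eq_true, if_true]
      omega
    | i + 1, 0 =>
      simp only [List.getElem?_cons_zero, Option.some.injEq] at hj
      simp only [List.getElem?_cons_succ] at hi
      have hv : 0 < l.count v := List.count_pos_iff.2 (List.mem_of_getElem? hi)
      simp only [List.count_cons, hj]
      simp only [beq_self_eq_true, if_true]
      omega
    | i + 1, j + 1 =>
      simp only [List.getElem?_cons_succ] at hi hj
      have := ih i j hi hj (fun hh => hij (by omega))
      exact le_trans this List.count_le_count_cons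

/-- Let `I` be an instance with terms `s` and `t` and let `ρ`
be a joinless rule. If `I ⊨ ρ` then `I[s,t ↦ u] ⊨ ρ` (for a fresh null `u`). -/
theorem joinless_rule_preserved_by_merge (I : Inst) (s t : GTerm)
    (hs : s ∈ adom I) (ht : t ∈ adom I)
    (n : ℕ) (hfresh : GTerm.null n ∉ adom I)
    (ρ : ERule) (hjoinless : ∀ v, ¬ isJoinVar ρ v)
    (hsat : satRule I ρ) :
    satRule (mergeInst I s t (GTerm.null n)) ρ := by
  classical
  intro h hbody
  set u : GTerm := GTerm.null n with hu
  set m : GTerm → GTerm := mergeMap s t u with hm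
  -- preimage atoms
  have hpre : ∀ a ∈ ρ.1, ∃ β ∈ I, β.pred = a.1 ∧ β.args.map m = a.2.map h := by
    intro a ha
    obtain ⟨β, hβI, hβeq⟩ := hbody a ha
    refine ⟨β, hβI, ?_, ?_⟩
    · exact congrArg GAtom.pred hβeq
    · have := congrArg GAtom.args hβeq
      simpa [substAtom] using this
  -- choice of the preimage atom for each body atom
  let F : PAtom → GAtom := fun a =>
    if ha : a ∈ ρ.1 then (hpre a ha).choose else ⟨0, []⟩
  have hF : ∀ a ∈ ρ.1, F a ∈ I ∧ (F a).pred = a.1 ∧ (F a).args.map m = a.2.map h := by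
    intro a ha
    have hspec := (hpre a ha).choose_spec
    simp only [F, dif_pos ha]
    exact ⟨hspec.1, hspec.2.1, hspec.2.2⟩
  -- uniqueness of occurrences of a body variable
  have hcle : ∀ v, (bodyVarList ρ).count v ≤ 1 := by
    intro v
    have := hjoinless v
    unfold isJoinVar at this
    omega
  have huniq : ∀ v, ∀ a ∈ ρ.1, ∀ i : ℕ, a.2[i]? = some v →
      ∀ b ∈ ρ.1, ∀ j : ℕ, b.2[j]? = some v → a = b ∧ i = j := by
    intro v a ha i hi b hb j hj
    have hcount : ((ρ.1).map (fun a => a.2.count v)).sum ≤ 1 := by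
      rw [← bvl_count]
      exact hcle v
    by_cases hab : a = b
    · subst hab
      refine ⟨rfl, ?_⟩
      by_contra hij
      have h2 : 2 ≤ a.2.count v := two_le_count_of_getElem? a.2 i j hi hj hij
      have hle : a.2.count v ≤ ((ρ.1).map (fun a => a.2.count v)).sum :=
        List.single_le_sum (fun x _ => Nat.zero_le x) _
          (List.mem_map_of_mem (f := fun a => a.2.count v) ha)
      omega
    · exfalso
      have h1 : 1 ≤ a.2.count v := List.count_pos_iff.2 (List.mem_of_getElem? hi)
      have h2 : 1 ≤ b.2.count v := List.count_pos_iff.2 (List.mem_of_getElem? hj)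
      have := sum_two_le (f := fun a => a.2.count v) ρ.1 ha hb hab
      omega
  -- the pulled-back assignment
  let P : ℕ → Prop := fun v => ∃ p : PAtom × ℕ, p.1 ∈ ρ.1 ∧ p.1.2[p.2]? = some v
  let h' : ℕ → GTerm := fun v =>
    if hv : P v then ((F hv.choose.1).args[hv.choose.2]?).getD (h v) else h v
  have hkey : ∀ a ∈ ρ.1, ∀ (i : ℕ) (v : ℕ), a.2[i]? = some v →
      (F a).args[i]? = some (h' v) ∧ m (h' v) = h v := by
    intro a ha i v hi
    have hv : P v := ⟨(a, i), ha, hi⟩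
    have hspec := hv.choose_spec
    obtain ⟨hab, hij⟩ := huniq v a ha i hi hv.choose.1 hspec.1 hv.choose.2 hspec.2
    have hlen : (F a).args.length = a.2.length := by
      have := congrArg List.length (hF a ha).2.2
      simpa using this
    have hilt : i < a.2.length := by
      by_contra hlt
      rw [List.getElem?_eq_none (by omega)] at hi
      simp at hi
    obtain ⟨w, hw⟩ : ∃ w, (F a).args[i]? = some w := by
      have hlt : i < (F a).args.length := by omega
      exact ⟨(F a).args[i], List.getElem?_eq_getElem hlt⟩
    have hh' : h' v = w := by
      simp only [h', dif_pos hv, ← hab, ← hij, hw, Option.getD_some]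
    have hmw : m w = h v := by
      have := congrArg (fun l => l[i]?) (hF a ha).2.2
      simp only [List.getElem?_map, hw, hi] at this
      simpa using this
    rw [hh']
    exact ⟨hw, hmw⟩
  have hmerge : ∀ v ∈ bodyVarList ρ, m (h' v) = h v := by
    intro v hv
    obtain ⟨a, ha, hva⟩ := (bvl_mem v ρ.1).1 hv
    obtain ⟨i, hi⟩ := List.mem_iff_getElem?.1 hva
    exact (hkey a ha i v hi).2
  have hbody' : ∀ a ∈ ρ.1, substAtom h' a ∈ I := by
    intro a ha
    have hFa := hF a ha
    have hargs : a.2.map h' = (F a).args := by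
      have hlen : (F a).args.length = a.2.length := by
        have := congrArg List.length hFa.2.2
        simpa using this
      apply List.ext_getElem?
      intro i
      by_cases hilt : i < a.2.length
      · have hi : a.2[i]? = some a.2[i] := List.getElem?_eq_getElem hilt
        have := (hkey a ha i a.2[i] hi).1
        rw [List.getElem?_map, hi, Option.map_some, this]
      · rw [List.getElem?_eq_none (by simpa using Nat.le_of_not_lt hilt),
          List.getElem?_eq_none (by omega)]
    have heq : substAtom h' a = F a := by
      cases hFa' : F a with
      | mk p args =>
        have h1 : p = a.1 := by rw [← hFa.2.1, hFa']
        have h2 : a.2.map h' = args := by rw [hargs, hFa']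
        simp [substAtom, h1, h2]
    rw [heq]
    exact hFa.1
  obtain ⟨g, hg1, hg2⟩ := hsat h' hbody'
  refine ⟨fun v => if v ∈ bodyVarList ρ then h v else m (g v), ?_, ?_⟩
  · intro v hv
    simp [hv]
  · refine ⟨substAtom g ρ.2, hg2, ?_⟩
    simp only [substAtom]
    congr 1
    rw [List.map_map]
    refine List.map_congr_left ?_
    intro v hv
    show m (g v) = if v ∈ bodyVarList ρ then h v else m (g v)
    by_cases hvb : v ∈ bodyVarList ρ
    · rw [if_pos hvb, hg1 v hvb]
      exact hmerge v hvb
    · rw [if_neg hvb]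
end
end

section
/- Let Q be a Boolean RPQ and A a DFA defining its regular language. Let I be an instance and t, t' two of its terms with equal regular types, ↑_A(t) = ↑_A(t'). Then I ⊨ Q if and only if I[t,t' ↦ t''] ⊨ Q. -/
set_option maxHeartbeats 1000000

noncomputable section

open Classical

private lemma adom_end {I : Inst} {s e : GTerm} {w : List ℕ}
    (hp : IPath I s w e) (hs : s ∈ adom I) : e ∈ adom I := by
  induction hp with
  | nil => exact hs
  | cons h _ ih => exact ih ⟨_, h, by simp⟩

private lemma path_map {I : Inst} {t t' u : GTerm} {s e : GTerm} {w : List ℕ}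
    (hp : IPath I s w e) :
    IPath (mergeInst I t t' u) (mergeMap t t' u s) w (mergeMap t t' u e) := by
  induction hp with
  | nil => exact IPath.nil _
  | cons h _ ih => exact IPath.cons ⟨_, h, rfl⟩ ih

private lemma adom_merge_mem {I : Inst} {t t' u x : GTerm} (hx : x ∈ adom I) :
    mergeMap t t' u x ∈ adom (mergeInst I t t' u) := by
  obtain ⟨α, hα, hxa⟩ := hx
  exact ⟨_, ⟨α, hα, rfl⟩, List.mem_map_of_mem hxa⟩

private lemma adom_merge_pre {I : Inst} {t t' u : GTerm} {x : GTerm}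
    (hx : x ∈ adom (mergeInst I t t' u)) :
    ∃ x', x' ∈ adom I ∧ mergeMap t t' u x' = x := by
  obtain ⟨α, hα, hxa⟩ := hx
  obtain ⟨β, hβ, rfl⟩ := hα
  simp only [List.mem_map] at hxa
  obtain ⟨x', hx', rfl⟩ := hxa
  exact ⟨x', ⟨β, hβ, hx'⟩, rfl⟩

private lemma mergeMap_eq_u {t t' u x : GTerm} (htu : t ≠ u) (hxu : x ≠ u)
    (h : mergeMap t t' u x = u) : x = t ∨ x = t' := by
  by_cases hc : x = t ∨ x = t'
  · exact hc
  · exact absurd (by simpa [mergeMap, hc] using h) hxu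

private lemma lift_path {σ : Type} (dfa : DFA ℕ σ) (I : Inst) (t t' u : GTerm)
    (htu : t ≠ u) (ht'u : t' ≠ u) (hu : u ∉ adom I)
    (hreg : regType I dfa t = regType I dfa t')
    {s e : GTerm} {w : List ℕ} (hp : IPath (mergeInst I t t' u) s w e) :
    s ∈ adom (mergeInst I t t' u) → ∀ q : σ, dfa.evalFrom q w ∈ dfa.accept →
      ∃ s' w' e', s' ∈ adom I ∧ mergeMap t t' u s' = s ∧ IPath I s' w' e' ∧
        dfa.evalFrom q w' ∈ dfa.accept := by
  induction hp with
  | nil t0 =>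
      intro hs q hq
      obtain ⟨s', hs', hfs⟩ := adom_merge_pre hs
      exact ⟨s', [], s', hs', hfs, IPath.nil _, hq⟩
  | @cons s m e p w hedge htail ih =>
      intro _ q hq
      have hmJ : m ∈ adom (mergeInst I t t' u) := ⟨_, hedge, by simp⟩
      have hq' : dfa.evalFrom (dfa.step q p) w ∈ dfa.accept := by
        simpa [DFA.evalFrom] using hq
      obtain ⟨m', w', e', hm'I, hfm', hpI, hacc⟩ := ih hmJ (dfa.step q p) hq'
      -- decompose the edge
      obtain ⟨β, hβ, heq⟩ := hedge
      obtain ⟨bp, bargs⟩ := β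
      have hpred : bp = p := congrArg GAtom.pred heq
      have hargs : bargs.map (mergeMap t t' u) = [s, m] := congrArg GAtom.args heq
      subst hpred
      match bargs, hargs with
      | [a, b], hargs =>
        simp only [List.map_cons, List.map_nil, List.cons.injEq, and_true] at hargs
        obtain ⟨hfa, hfb⟩ := hargs
        have haI : a ∈ adom I := ⟨_, hβ, by simp⟩
        have hbI : b ∈ adom I := ⟨_, hβ, by simp⟩
        by_cases hm : m = u
        · -- m is the merged null: use regular types to restart from b
          subst hm
          have hb' : b = t ∨ b = t' :=
            mergeMap_eq_u htu (fun h => hu (h ▸ hbI)) hfb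
          have hm'2 : m' = t ∨ m' = t' :=
            mergeMap_eq_u htu (fun h => hu (h ▸ hm'I)) hfm'
          have hPm' : (dfa.step q bp, dfa.evalFrom (dfa.step q bp) w') ∈ regType I dfa m' :=
            ⟨w', e', hpI, rfl⟩
          have hPboth : (dfa.step q bp, dfa.evalFrom (dfa.step q bp) w') ∈ regType I dfa t ∧
              (dfa.step q bp, dfa.evalFrom (dfa.step q bp) w') ∈ regType I dfa t' := by
            rcases hm'2 with h | h
            · subst h; exact ⟨hPm', hreg ▸ hPm'⟩
            · subst h; exact ⟨hreg ▸ hPm', hPm'⟩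
          have hPb : (dfa.step q bp, dfa.evalFrom (dfa.step q bp) w') ∈ regType I dfa b := by
            rcases hb' with h | h
            · subst h; exact hPboth.1
            · subst h; exact hPboth.2
          obtain ⟨w'', e'', hp'', hev⟩ := hPb
          refine ⟨a, bp :: w'', e'', haI, hfa, IPath.cons hβ hp'', ?_⟩
          simp only [DFA.evalFrom, List.foldl_cons] at hev ⊢
          rw [hev]
          exact hacc
        · -- m is an ordinary vertex: m' = m = b
          have hm'm : m' = m := by
            by_cases hc : m' = t ∨ m' = t'
            · exact absurd ((by simpa [mergeMap, hc] using hfm' : u = m).symm) hm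
            · simpa [mergeMap, hc] using hfm'
          have hbm : b = m := by
            by_cases hc : b = t ∨ b = t'
            · exact absurd ((by simpa [mergeMap, hc] using hfb : u = m).symm) hm
            · simpa [mergeMap, hc] using hfb
          refine ⟨a, bp :: w', e', haI, hfa, IPath.cons hβ (hbm ▸ hm'm ▸ hpI), ?_⟩
          simpa [DFA.evalFrom] using hacc

/-- Let `Q` be a Boolean RPQ and `dfa` a DFA defining its
regular language. If two terms `t`, `t'` of an instance `I` have equal regular
types `↑_A(t) = ↑_A(t')`, then `I ⊨ Q` iff `I[t,t' ↦ t''] ⊨ Q`. -/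
theorem merge_equal_regular_types_preserves_rpq {σ : Type}
    (A : RegularExpression ℕ) (dfa : DFA ℕ σ)
    (hdfa : dfa.accepts = A.matches')
    (I : Inst) (t t' : GTerm) (ht : t ∈ adom I) (ht' : t' ∈ adom I)
    (n : ℕ) (hfresh : GTerm.null n ∉ adom I)
    (hreg : regType I dfa t = regType I dfa t') :
    satRPQ I A ↔ satRPQ (mergeInst I t t' (GTerm.null n)) A := by
  set u := GTerm.null n with hu
  have htu : t ≠ u := fun h => hfresh (h ▸ ht)
  have ht'u : t' ≠ u := fun h => hfresh (h ▸ ht')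
  constructor
  · rintro ⟨s, e, w, hs, he, hp, hw⟩
    exact ⟨_, _, w, adom_merge_mem hs, adom_merge_mem he, path_map hp, hw⟩
  · rintro ⟨s, e, w, hs, he, hp, hw⟩
    rw [← hdfa] at hw
    obtain ⟨s', w', e', hs', _, hp', hacc⟩ :=
      lift_path dfa I t t' u htu ht'u hfresh hreg hp hs dfa.start
        ((DFA.mem_accepts (M := dfa)).mp hw)
    exact ⟨s', e', w', hs', adom_end hp' hs', hp',
      hdfa ▸ ((DFA.mem_accepts (M := dfa)).mpr hacc)⟩
end
end
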